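/- arXiv:1305.6018 — 9 statements merged into one kernel-verified Lean document; each statement's English description precedes it below -/
import Mathlib

section
/- For every positive integer k and every positive integer r, the weighted average S_r(k) := (1/k^{r+1}) · Σ_{j=1}^{k} j^r · c_k(j) satisfies S_r(k) = φ(k)/(2k) + (1/(r+1)) · Σ_{m=0}^{⌊r/2⌋} C(r+1, 2m) · B_{2m} · ∏_{p | k, p prime} (1 − 1/p^{2m}), where B_{2m} denote the Bernoulli numbers and φ is Euler's totient function. -/
open Finset

/-- The Ramanujan sum `c_k(j) = ∑_{1 ≤ m ≤ k, gcd(m,k)=1} exp(2πimj/k)`. -/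
noncomputable def ramanujanSum (k : ℕ) (j : ℤ) : ℂ :=
  ∑ m ∈ (Finset.Icc 1 k).filter (fun m => Nat.gcd m k = 1),
    Complex.exp (2 * (Real.pi : ℂ) * Complex.I * (m : ℂ) * (j : ℂ) / (k : ℂ))

section Aux
open ArithmeticFunction

lemma rou_sum (n : ℕ) (hn : 0 < n) (j : ℤ) :
    ∑ t ∈ Finset.range n, Complex.exp (2 * (Real.pi : ℂ) * Complex.I * (t : ℂ) * (j : ℂ) / (n : ℂ))
      = if (n : ℤ) ∣ j then (n : ℂ) else 0 := by
  have hn0 : (n : ℂ) ≠ 0 := Nat.cast_ne_zero.mpr hn.ne'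
  set z : ℂ := Complex.exp (2 * (Real.pi : ℂ) * Complex.I * (j : ℂ) / (n : ℂ)) with hz
  have hterm : ∀ t : ℕ, Complex.exp (2 * (Real.pi : ℂ) * Complex.I * (t : ℂ) * (j : ℂ) / (n : ℂ)) = z ^ t := by
    intro t
    rw [hz, ← Complex.exp_nat_mul]
    ring_nf
  rw [Finset.sum_congr rfl fun t _ => hterm t]
  by_cases hdvd : (n : ℤ) ∣ j
  · rw [if_pos hdvd]
    obtain ⟨c, hc⟩ := hdvd
    have hz1 : z = 1 := by
      rw [hz, hc]
      push_cast
      rw [show 2 * (Real.pi : ℂ) * Complex.I * ((n : ℂ) * (c : ℂ)) / (n : ℂ)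
            = (c : ℂ) * (2 * (Real.pi : ℂ) * Complex.I) by field_simp]
      exact Complex.exp_int_mul_two_pi_mul_I c
    simp [hz1]
  · have hpi : (Real.pi : ℂ) ≠ 0 := by exact_mod_cast Real.pi_ne_zero
    have hz1 : z ≠ 1 := by
      intro h
      apply hdvd
      rw [hz, Complex.exp_eq_one_iff] at h
      obtain ⟨m, hm⟩ := h
      have h2 : (2 * (Real.pi : ℂ) * Complex.I) ≠ 0 := by
        simp [hpi, Complex.I_ne_zero]
      have hj : (j : ℂ) = (m : ℂ) * (n : ℂ) := by
        apply mul_left_cancel₀ h2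
        field_simp at hm
        linear_combination (2 * (Real.pi : ℂ) * Complex.I) * hm
      have : j = m * n := by exact_mod_cast hj
      exact ⟨m, by linarith⟩
    have hzn : z ^ n = 1 := by
      rw [hz, ← Complex.exp_nat_mul]
      rw [show (n : ℂ) * (2 * (Real.pi : ℂ) * Complex.I * (j : ℂ) / (n : ℂ))
            = (j : ℂ) * (2 * (Real.pi : ℂ) * Complex.I) by field_simp]
      exact Complex.exp_int_mul_two_pi_mul_I j
    rw [geom_sum_eq hz1, hzn, if_neg hdvd]
    simp

lemma sum_moebius_indicator (n : ℕ) :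
    (∑ d ∈ n.divisors, ArithmeticFunction.moebius d) = if n = 1 then 1 else 0 := by
  rw [← ArithmeticFunction.coe_mul_zeta_apply, ArithmeticFunction.moebius_mul_coe_zeta,
    ArithmeticFunction.one_apply]

lemma gcd_divisors_eq (k m : ℕ) (hk : 0 < k) :
    (Nat.gcd m k).divisors = k.divisors.filter (· ∣ m) := by
  ext d
  simp only [Nat.mem_divisors, Finset.mem_filter]
  constructor
  · rintro ⟨hd, hne⟩
    exact ⟨⟨hd.trans (Nat.gcd_dvd_right m k), hk.ne'⟩, hd.trans (Nat.gcd_dvd_left m k)⟩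
  · rintro ⟨⟨hdk, -⟩, hdm⟩
    refine ⟨Nat.dvd_gcd hdm hdk, ?_⟩
    simp only [ne_eq, Nat.gcd_eq_zero_iff, not_and]
    intro _ h; omega

lemma sum_filter_dvd_Icc {M : Type*} [AddCommMonoid M] (f : ℕ → M) {k e : ℕ} (he : e ∣ k)
    (he0 : 0 < e) :
    ∑ j ∈ (Finset.Icc 1 k).filter (e ∣ ·), f j = ∑ t ∈ Finset.Icc 1 (k / e), f (e * t) := by
  refine (Finset.sum_bij' (fun t (_ : t ∈ Finset.Icc 1 (k / e)) => e * t)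
    (fun j (_ : j ∈ (Finset.Icc 1 k).filter (e ∣ ·)) => j / e) ?_ ?_ ?_ ?_ ?_).symm
  · intro t ht
    simp only [Finset.mem_Icc, Finset.mem_filter] at ht ⊢
    obtain ⟨h1, h2⟩ := ht
    refine ⟨⟨by nlinarith, ?_⟩, Dvd.intro t rfl⟩
    calc e * t ≤ e * (k / e) := Nat.mul_le_mul_left e h2
    _ = k := Nat.mul_div_cancel' he
  · intro j hj
    simp only [Finset.mem_filter, Finset.mem_Icc] at hj ⊢
    obtain ⟨⟨h1, h2⟩, hd⟩ := hj
    exact ⟨(Nat.one_le_div_iff he0).mpr (Nat.le_of_dvd (by omega) hd), Nat.div_le_div_right h2⟩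
  · intro t ht
    exact Nat.mul_div_cancel_left t he0
  · intro j hj
    simp only [Finset.mem_filter] at hj
    exact Nat.mul_div_cancel' hj.2
  · intro t ht
    rfl




lemma Icc_exp_eq (n : ℕ) (hn : 0 < n) (j : ℤ) :
    ∑ t ∈ Finset.Icc 1 n,
        Complex.exp (2 * (Real.pi : ℂ) * Complex.I * (t : ℂ) * (j : ℂ) / (n : ℂ))
      = ∑ t ∈ Finset.range n,
        Complex.exp (2 * (Real.pi : ℂ) * Complex.I * (t : ℂ) * (j : ℂ) / (n : ℂ)) := by
  have hn0 : (n : ℂ) ≠ 0 := Nat.cast_ne_zero.mpr hn.ne'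
  set f : ℕ → ℂ := fun t =>
    Complex.exp (2 * (Real.pi : ℂ) * Complex.I * (t : ℂ) * (j : ℂ) / (n : ℂ)) with hf
  have h0 : f 0 = 1 := by simp [hf]
  have hnn : f n = 1 := by
    rw [hf]
    simp only
    rw [show 2 * (Real.pi : ℂ) * Complex.I * (n : ℂ) * (j : ℂ) / (n : ℂ)
          = (j : ℂ) * (2 * (Real.pi : ℂ) * Complex.I) by field_simp]
    exact Complex.exp_int_mul_two_pi_mul_I j
  have : Finset.Icc 1 n = Finset.Ico 1 (n + 1) := by rw [Finset.Ico_add_one_right_eq_Icc]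
  rw [this, Finset.sum_Ico_eq_sub _ (by omega), Finset.sum_range_succ, Finset.sum_range_one]
  have h0' : Complex.exp (2 * (Real.pi : ℂ) * Complex.I * ((0:ℕ) : ℂ) * (j : ℂ) / (n : ℂ)) = 1 := h0
  have hnn' : Complex.exp (2 * (Real.pi : ℂ) * Complex.I * ((n:ℕ) : ℂ) * (j : ℂ) / (n : ℂ)) = 1 := hnn
  rw [hnn', h0']
  ring

lemma ramanujanSum_eq (k : ℕ) (hk : 0 < k) (j : ℤ) :
    ramanujanSum k j
      = ∑ e ∈ k.divisors, (moebius (k / e) : ℂ) * (e : ℂ) * (if (e : ℤ) ∣ j then 1 else 0) := by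
  rw [ramanujanSum, Finset.sum_filter]
  have step1 : ∀ m ∈ Finset.Icc 1 k,
      (if Nat.gcd m k = 1 then
          Complex.exp (2 * (Real.pi : ℂ) * Complex.I * (m : ℂ) * (j : ℂ) / (k : ℂ)) else 0)
        = ∑ d ∈ k.divisors, (if d ∣ m then (moebius d : ℂ) *
            Complex.exp (2 * (Real.pi : ℂ) * Complex.I * (m : ℂ) * (j : ℂ) / (k : ℂ)) else 0) := by
    intro m hm
    rw [← Finset.sum_filter, ← gcd_divisors_eq k m hk, ← Finset.sum_mul]
    have : (∑ d ∈ (Nat.gcd m k).divisors, (moebius d : ℂ))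
        = if Nat.gcd m k = 1 then 1 else 0 := by
      have h := sum_moebius_indicator (Nat.gcd m k)
      have : (∑ d ∈ (Nat.gcd m k).divisors, (moebius d : ℂ))
          = ((∑ d ∈ (Nat.gcd m k).divisors, moebius d : ℤ) : ℂ) := by push_cast; rfl
      rw [this, h]
      split <;> simp
    rw [this]
    split <;> simp
  rw [Finset.sum_congr rfl step1, Finset.sum_comm]
  have main : ∀ d ∈ k.divisors,
      (∑ m ∈ Finset.Icc 1 k, if d ∣ m then (moebius d : ℂ) *
          Complex.exp (2 * (Real.pi : ℂ) * Complex.I * (m : ℂ) * (j : ℂ) / (k : ℂ)) else 0)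
        = (moebius (k / (k / d)) : ℂ) * ((k / d : ℕ) : ℂ) *
            (if ((k / d : ℕ) : ℤ) ∣ j then 1 else 0) := by
    intro d hd
    obtain ⟨hdk, hk0⟩ := Nat.mem_divisors.mp hd
    have hd0 : 0 < d := Nat.pos_of_dvd_of_pos hdk hk
    have hkd : 0 < k / d := Nat.div_pos (Nat.le_of_dvd hk hdk) hd0
    have hdd : k / (k / d) = d := Nat.div_div_self hdk hk0
    have hkd0 : ((k / d : ℕ) : ℂ) ≠ 0 := Nat.cast_ne_zero.mpr hkd.ne'
    have hk0' : (k : ℂ) ≠ 0 := Nat.cast_ne_zero.mpr hk.ne'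
    have hmul : ((k / d : ℕ) : ℂ) * (d : ℂ) = (k : ℂ) := by
      exact_mod_cast congrArg (Nat.cast : ℕ → ℂ) (Nat.div_mul_cancel hdk)
    rw [← Finset.sum_filter, ← Finset.mul_sum,
      sum_filter_dvd_Icc (fun m => Complex.exp
        (2 * (Real.pi : ℂ) * Complex.I * (m : ℂ) * (j : ℂ) / (k : ℂ))) hdk hd0]
    have hexp : ∀ t : ℕ,
        Complex.exp (2 * (Real.pi : ℂ) * Complex.I * ((d * t : ℕ) : ℂ) * (j : ℂ) / (k : ℂ))
          = Complex.exp (2 * (Real.pi : ℂ) * Complex.I * (t : ℂ) * (j : ℂ) / ((k / d : ℕ) : ℂ)) := by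
      intro t
      congr 1
      push_cast
      rw [div_eq_div_iff hk0' hkd0]
      linear_combination (2 * (Real.pi : ℂ) * Complex.I * (t : ℂ) * (j : ℂ)) * hmul
    rw [Finset.sum_congr rfl fun t _ => hexp t, Icc_exp_eq (k / d) hkd j,
      rou_sum (k / d) hkd j, hdd]
    split <;> ring
  rw [Finset.sum_congr rfl main]
  exact Nat.sum_div_divisors k
    (fun e => (moebius (k / e) : ℂ) * (e : ℂ) * (if (e : ℤ) ∣ j then 1 else 0))

lemma squarefree_prod_primes {s : Finset ℕ} (hs : ∀ p ∈ s, p.Prime) :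
    Squarefree (∏ p ∈ s, p) := by
  classical
  induction s using Finset.induction_on with
  | empty => simpa using squarefree_one
  | @insert a s' hx ih =>
    rw [Finset.prod_insert hx]
    have hap : a.Prime := hs a (Finset.mem_insert_self a s')
    have hs' : ∀ p ∈ s', p.Prime := fun p hp => hs p (Finset.mem_insert_of_mem hp)
    have hcop : Nat.Coprime a (∏ p ∈ s', p) := by
      apply Nat.Coprime.prod_right
      intro p hp
      exact (Nat.coprime_primes hap (hs' p hp)).mpr (fun h => hx (h ▸ hp))
    rw [Nat.squarefree_mul hcop]
    exact ⟨hap.squarefree, ih hs'⟩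

noncomputable def invPow (i : ℕ) : ArithmeticFunction ℂ :=
  ⟨fun d => if d = 0 then 0 else 1 / (d : ℂ) ^ i, rfl⟩

lemma invPow_isMultiplicative (i : ℕ) : (invPow i).IsMultiplicative := by
  rw [ArithmeticFunction.IsMultiplicative.iff_ne_zero]
  constructor
  · simp [invPow]
  · intro m n hm hn _
    simp only [invPow, ArithmeticFunction.coe_mk, if_neg hm, if_neg hn,
      if_neg (Nat.mul_ne_zero hm hn)]
    push_cast
    rw [mul_pow]
    field_simp

lemma moebius_div_pow_sum (k : ℕ) (hk : 0 < k) (i : ℕ) :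
    ∑ d ∈ k.divisors, (moebius d : ℂ) * (1 / (d : ℂ) ^ i)
      = ∏ p ∈ k.primeFactors, (1 - 1 / (p : ℂ) ^ i) := by
  classical
  set Q := ∏ p ∈ k.primeFactors, p with hQ
  have hQsf : Squarefree Q := squarefree_prod_primes (fun p hp => Nat.prime_of_mem_primeFactors hp)
  have hQdvd : Q ∣ k := Nat.prod_primeFactors_dvd k
  have hQpf : Q.primeFactors = k.primeFactors :=
    Nat.primeFactors_prod (fun p hp => Nat.prime_of_mem_primeFactors hp)
  have key := ArithmeticFunction.IsMultiplicative.prodPrimeFactors_one_sub_of_squarefree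
    (invPow i) (invPow_isMultiplicative i) hQsf
  rw [hQpf] at key
  have hfp : ∀ p ∈ k.primeFactors, 1 - invPow i p = 1 - 1 / (p : ℂ) ^ i := by
    intro p hp
    have : p ≠ 0 := (Nat.prime_of_mem_primeFactors hp).ne_zero
    simp [invPow, this]
  rw [← Finset.prod_congr rfl hfp, key]
  -- now: ∑ d ∈ k.divisors, μ d * (1/d^i) = ∑ d ∈ Q.divisors, μ d * invPow i d
  rw [← Finset.sum_subset (Nat.divisors_subset_of_dvd hk.ne' hQdvd)
    (fun d hd hdQ => ?_)]
  · refine Finset.sum_congr rfl fun d hd => ?_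
    have hd0 : d ≠ 0 := (Nat.pos_of_mem_divisors hd).ne'
    simp [invPow, hd0]
  · -- d ∣ k, d ∉ Q.divisors ⟹ μ d = 0
    have hdk : d ∣ k := (Nat.mem_divisors.mp hd).1
    have : ¬Squarefree d := by
      intro hsf
      apply hdQ
      rw [Nat.mem_divisors]
      refine ⟨?_, hQsf.ne_zero⟩
      calc d = ∏ p ∈ d.primeFactors, p := (Nat.prod_primeFactors_of_squarefree hsf).symm
      _ ∣ Q := Finset.prod_dvd_prod_of_subset _ _ _ (Nat.primeFactors_mono hdk hk.ne')
    rw [ArithmeticFunction.moebius_eq_zero_of_not_squarefree this]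
    simp

lemma faulhaber_complex (n p : ℕ) :
    ∑ t ∈ Finset.Icc 1 n, (t : ℂ) ^ p
      = ∑ i ∈ Finset.range (p + 1),
          (bernoulli' i : ℂ) * ((p + 1).choose i : ℂ) * (n : ℂ) ^ (p + 1 - i) / ((p : ℂ) + 1) := by
  have h := sum_Ico_pow n p
  have h2 := congrArg (fun q : ℚ => (q : ℂ)) h
  simp only [Rat.cast_sum] at h2 ⊢
  rw [← Finset.Ico_add_one_right_eq_Icc]
  convert h2 using 2 with t ht
  · push_cast
    rfl
  · push_cast
    ring

end Aux

open ArithmeticFunction in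




theorem weighted_average_ramanujan_sum (k r : ℕ) (hk : 0 < k) (hr : 0 < r) :
    (1 / (k : ℂ) ^ (r + 1)) * ∑ j ∈ Finset.Icc 1 k, (j : ℂ) ^ r * ramanujanSum k j =
      (Nat.totient k : ℂ) / (2 * k) +
        (1 / ((r : ℂ) + 1)) * ∑ m ∈ Finset.range (r / 2 + 1),
          ((r + 1).choose (2 * m) : ℂ) * (bernoulli (2 * m) : ℂ) *
            ∏ p ∈ k.primeFactors, (1 - 1 / (p : ℂ) ^ (2 * m)) := by
  classical
  have hk0 : (k : ℂ) ≠ 0 := Nat.cast_ne_zero.mpr hk.ne'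
  have hr1 : ((r : ℂ) + 1) ≠ 0 := by
    have := Nat.cast_add_one_ne_zero (R := ℂ) r
    exact_mod_cast this
  set P : ℕ → ℂ := fun i => ∏ p ∈ k.primeFactors, (1 - 1 / (p : ℂ) ^ i) with hP
  -- Step A
  have inner : ∀ e ∈ k.divisors,
      (∑ j ∈ Finset.Icc 1 k, (j : ℂ) ^ r *
        ((moebius (k / e) : ℂ) * (e : ℂ) * (if (e : ℤ) ∣ (j : ℤ) then 1 else 0)))
      = (moebius (k / e) : ℂ) * (e : ℂ) ^ (r + 1) * ∑ t ∈ Finset.Icc 1 (k / e), (t : ℂ) ^ r := by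
    intro e he
    obtain ⟨hek, -⟩ := Nat.mem_divisors.mp he
    have he0 : 0 < e := Nat.pos_of_dvd_of_pos hek hk
    have h1 : ∀ j : ℕ, (j : ℂ) ^ r *
        ((moebius (k / e) : ℂ) * (e : ℂ) * (if (e : ℤ) ∣ (j : ℤ) then 1 else 0))
        = (moebius (k / e) : ℂ) * (e : ℂ) * (if e ∣ j then (j : ℂ) ^ r else 0) := by
      intro j
      simp only [Int.natCast_dvd_natCast]
      split <;> ring
    rw [Finset.sum_congr rfl (fun j _ => h1 j), ← Finset.mul_sum, ← Finset.sum_filter,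
      sum_filter_dvd_Icc (fun j => (j : ℂ) ^ r) hek he0]
    have h2 : ∀ t : ℕ, ((e * t : ℕ) : ℂ) ^ r = (e : ℂ) ^ r * (t : ℂ) ^ r := by
      intro t; push_cast; ring
    rw [Finset.sum_congr rfl (fun t _ => h2 t), ← Finset.mul_sum]
    ring
  have hT : (∑ j ∈ Finset.Icc 1 k, (j : ℂ) ^ r * ramanujanSum k j)
      = ∑ e ∈ k.divisors, (moebius (k / e) : ℂ) * (e : ℂ) ^ (r + 1) *
          ∑ t ∈ Finset.Icc 1 (k / e), (t : ℂ) ^ r := by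
    calc (∑ j ∈ Finset.Icc 1 k, (j : ℂ) ^ r * ramanujanSum k j)
        = ∑ j ∈ Finset.Icc 1 k, ∑ e ∈ k.divisors, (j : ℂ) ^ r *
            ((moebius (k / e) : ℂ) * (e : ℂ) * (if (e : ℤ) ∣ (j : ℤ) then 1 else 0)) := by
          refine Finset.sum_congr rfl fun j _ => ?_
          rw [ramanujanSum_eq k hk (j : ℤ), Finset.mul_sum]
      _ = ∑ e ∈ k.divisors, ∑ j ∈ Finset.Icc 1 k, (j : ℂ) ^ r *
            ((moebius (k / e) : ℂ) * (e : ℂ) * (if (e : ℤ) ∣ (j : ℤ) then 1 else 0)) :=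
          Finset.sum_comm
      _ = _ := Finset.sum_congr rfl inner
  rw [hT]
  -- Step B: Faulhaber + swap
  have stepB : (1 / (k : ℂ) ^ (r + 1)) * ∑ e ∈ k.divisors,
        (moebius (k / e) : ℂ) * (e : ℂ) ^ (r + 1) * ∑ t ∈ Finset.Icc 1 (k / e), (t : ℂ) ^ r
      = ∑ i ∈ Finset.range (r + 1),
          (bernoulli' i : ℂ) * ((r + 1).choose i : ℂ) / ((r : ℂ) + 1) * P i := by
    rw [Finset.sum_congr rfl (fun e _ => by rw [faulhaber_complex (k / e) r])]
    simp_rw [Finset.mul_sum]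
    rw [Finset.sum_comm]
    refine Finset.sum_congr rfl fun i hi => ?_
    have hir : i ≤ r := by simpa using Nat.lt_succ_iff.mp (Finset.mem_range.mp hi)
    have key : ∀ e ∈ k.divisors,
        (1 / (k : ℂ) ^ (r + 1)) * ((moebius (k / e) : ℂ) * (e : ℂ) ^ (r + 1) *
          ((bernoulli' i : ℂ) * ((r + 1).choose i : ℂ) * ((k / e : ℕ) : ℂ) ^ (r + 1 - i)
            / ((r : ℂ) + 1)))
        = (bernoulli' i : ℂ) * ((r + 1).choose i : ℂ) / ((r : ℂ) + 1) *
            ((moebius (k / e) : ℂ) * (1 / ((k / e : ℕ) : ℂ) ^ i)) := by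
      intro e he
      obtain ⟨hek, -⟩ := Nat.mem_divisors.mp he
      have he0 : 0 < e := Nat.pos_of_dvd_of_pos hek hk
      have hn0 : 0 < k / e := Nat.div_pos (Nat.le_of_dvd hk hek) he0
      have hnC : ((k / e : ℕ) : ℂ) ≠ 0 := Nat.cast_ne_zero.mpr hn0.ne'
      have hmul : (e : ℂ) * ((k / e : ℕ) : ℂ) = (k : ℂ) := by
        exact_mod_cast congrArg (Nat.cast : ℕ → ℂ) (Nat.mul_div_cancel' hek)
      have h1 : (e : ℂ) ^ (r + 1) * ((k / e : ℕ) : ℂ) ^ (r + 1) = (k : ℂ) ^ (r + 1) := by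
        rw [← mul_pow, hmul]
      have h2 : ((k / e : ℕ) : ℂ) ^ (r + 1 - i) * ((k / e : ℕ) : ℂ) ^ i
          = ((k / e : ℕ) : ℂ) ^ (r + 1) := by
        rw [← pow_add]; congr 1; omega
      have hkpow : ((k : ℂ)) ^ (r + 1) ≠ 0 := pow_ne_zero _ hk0
      have hnpow : ((k / e : ℕ) : ℂ) ^ i ≠ 0 := pow_ne_zero _ hnC
      have h3 : (e : ℂ) ^ (r + 1) * ((k / e : ℕ) : ℂ) ^ (r + 1 - i) / (k : ℂ) ^ (r + 1)
          = 1 / ((k / e : ℕ) : ℂ) ^ i := by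
        rw [div_eq_div_iff hkpow hnpow]
        linear_combination (e : ℂ) ^ (r + 1) * h2 + h1
      calc (1 / (k : ℂ) ^ (r + 1)) * ((moebius (k / e) : ℂ) * (e : ℂ) ^ (r + 1) *
          ((bernoulli' i : ℂ) * ((r + 1).choose i : ℂ) * ((k / e : ℕ) : ℂ) ^ (r + 1 - i)
            / ((r : ℂ) + 1)))
          = (bernoulli' i : ℂ) * ((r + 1).choose i : ℂ) / ((r : ℂ) + 1) *
            ((moebius (k / e) : ℂ) *
              ((e : ℂ) ^ (r + 1) * ((k / e : ℕ) : ℂ) ^ (r + 1 - i) / (k : ℂ) ^ (r + 1))) := by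
            ring
        _ = _ := by rw [h3]
    rw [Finset.sum_congr rfl key, ← Finset.mul_sum]
    have : (∑ e ∈ k.divisors, (moebius (k / e) : ℂ) * (1 / ((k / e : ℕ) : ℂ) ^ i)) = P i := by
      rw [Nat.sum_div_divisors k (fun d => (moebius d : ℂ) * (1 / (d : ℂ) ^ i)),
        moebius_div_pow_sum k hk i]
    rw [this]
  rw [stepB]
  have h1mem : (1 : ℕ) ∈ Finset.range (r + 1) := Finset.mem_range.mpr (by omega)
  rw [← Finset.add_sum_erase _
    (fun i => (bernoulli' i : ℂ) * ((r + 1).choose i : ℂ) / ((r : ℂ) + 1) * P i) h1mem]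
  congr 1
  · -- first term
    have htot := congrArg (fun q : ℚ => (q : ℂ)) (Nat.totient_eq_mul_prod_factors k)
    push_cast at htot
    have hP1 : P 1 = ∏ p ∈ k.primeFactors, (1 - ((p : ℂ))⁻¹) := by
      simp [hP, pow_one, one_div]
    have hc1 : (bernoulli' 1 : ℂ) * ((r + 1).choose 1 : ℂ) / ((r : ℂ) + 1) * P 1 = P 1 / 2 := by
      rw [bernoulli'_one, Nat.choose_one_right]
      push_cast
      field_simp
    rw [hc1, hP1, htot]
    have h2k : (2 : ℂ) * (k : ℂ) ≠ 0 := by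
      simp [hk0]
    field_simp
  · -- remaining sum
    rw [← Finset.sum_filter_add_sum_filter_not ((Finset.range (r + 1)).erase 1) (Even ·)]
    have hodd : (∑ i ∈ ((Finset.range (r + 1)).erase 1).filter (fun i => ¬ Even i),
        (bernoulli' i : ℂ) * ((r + 1).choose i : ℂ) / ((r : ℂ) + 1) * P i) = 0 := by
      refine Finset.sum_eq_zero fun i hi => ?_
      simp only [Finset.mem_filter, Finset.mem_erase, Finset.mem_range] at hi
      obtain ⟨⟨hne1, -⟩, hnotEven⟩ := hi
      have hio : Odd i := Nat.not_even_iff_odd.mp hnotEven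
      have h1i : 1 < i := by
        rw [Nat.odd_iff] at hio
        omega
      rw [bernoulli'_eq_zero_of_odd hio h1i]
      simp
    rw [hodd, add_zero]
    have hfe : ((Finset.range (r + 1)).erase 1).filter (fun i => Even i)
        = (Finset.range (r + 1)).filter (fun i => Even i) := by
      ext i
      simp only [Finset.mem_filter, Finset.mem_erase, Finset.mem_range, Nat.even_iff]
      omega
    rw [hfe, Finset.mul_sum]
    refine Finset.sum_bij' (fun i _ => i / 2) (fun m _ => 2 * m) ?_ ?_ ?_ ?_ ?_
    · intro i hi
      simp only [Finset.mem_filter, Finset.mem_range, Nat.even_iff] at hi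
      simp only [Finset.mem_range]
      omega
    · intro m hm
      simp only [Finset.mem_range] at hm
      simp only [Finset.mem_filter, Finset.mem_range, Nat.even_iff]
      omega
    · intro i hi
      simp only [Finset.mem_filter, Finset.mem_range, Nat.even_iff] at hi
      show 2 * (i / 2) = i
      omega
    · intro m hm
      show 2 * m / 2 = m
      omega
    · intro i hi
      simp only [Finset.mem_filter, Finset.mem_range, Nat.even_iff] at hi
      have h2i : 2 * (i / 2) = i := by omega
      rw [h2i]
      have hne : i ≠ 1 := by omega
      rw [bernoulli_eq_bernoulli'_of_ne_one hne]
      ring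
end

section
/- For every positive integer k and every positive integer r, (1/k^{r+1}) · Σ_{j=1}^{k} j^r · c_k(j) = Σ_{d | k} (μ(d)/d^{r+1}) · Σ_{m=1}^{d} m^r, where μ is the Möbius function. -/
open Finset ArithmeticFunction

/-- Geometric sum of `q`-th roots of unity. -/
lemma geom_sum_exp_aux (q : ℕ) (hq : 0 < q) (j : ℕ) :
    ∑ t ∈ Finset.Icc 1 q, Complex.exp (2 * (Real.pi : ℂ) * Complex.I * (t : ℂ) * (j : ℂ) / (q : ℂ))
      = if q ∣ j then (q : ℂ) else 0 := by
  have hq0 : (q : ℂ) ≠ 0 := Nat.cast_ne_zero.mpr hq.ne'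
  have h2 : (2 * (Real.pi:ℂ) * Complex.I) ≠ 0 := by
    simp [Real.pi_ne_zero, Complex.I_ne_zero]
  set z : ℂ := Complex.exp (2 * (Real.pi : ℂ) * Complex.I * (j : ℂ) / (q : ℂ)) with hz
  have hpow : ∀ t : ℕ, Complex.exp (2 * (Real.pi : ℂ) * Complex.I * (t : ℂ) * (j : ℂ) / (q : ℂ)) = z ^ t := by
    intro t
    rw [hz, ← Complex.exp_nat_mul]
    ring_nf
  have hzq : z ^ q = 1 := by
    rw [hz, ← Complex.exp_nat_mul]
    have : (q : ℂ) * (2 * (Real.pi : ℂ) * Complex.I * (j : ℂ) / (q : ℂ)) = (j : ℂ) * (2 * Real.pi * Complex.I) := by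
      field_simp
    rw [this, Complex.exp_nat_mul_two_pi_mul_I]
  have hone : z = 1 ↔ q ∣ j := by
    rw [hz, Complex.exp_eq_one_iff]
    constructor
    · rintro ⟨n, hn⟩
      have hj : (j : ℂ) = (n : ℂ) * q := by
        have hn' : 2 * (Real.pi:ℂ) * Complex.I * (j : ℂ) = (n : ℂ) * (2 * Real.pi * Complex.I) * q := by
          field_simp at hn
          linear_combination (2 * (Real.pi:ℂ) * Complex.I) * hn
        have := mul_left_cancel₀ h2 (by linear_combination hn' : (2 * (Real.pi:ℂ) * Complex.I) * (j:ℂ) = (2 * (Real.pi:ℂ) * Complex.I) * ((n:ℂ) * q))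
        exact this
      have : (j : ℤ) = n * q := by exact_mod_cast hj
      have : (q : ℤ) ∣ (j : ℤ) := ⟨n, by linarith⟩
      exact_mod_cast this
    · rintro ⟨c, rfl⟩
      exact ⟨c, by push_cast; field_simp⟩
  simp only [hpow]
  by_cases hd : q ∣ j
  · have hz1 : z = 1 := hone.mpr hd
    simp [hd, hz1]
  · have hz1 : z ≠ 1 := fun h => hd (hone.mp h)
    rw [if_neg hd]
    have : ∑ t ∈ Finset.Icc 1 q, z ^ t = ∑ t ∈ Finset.range q, z ^ (1 + t) := by
      rw [← Finset.Ico_add_one_right_eq_Icc, Finset.sum_Ico_eq_sum_range]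
      simp
    rw [this]
    have : ∑ t ∈ Finset.range q, z ^ (1 + t) = z * ∑ t ∈ Finset.range q, z ^ t := by
      rw [Finset.mul_sum]; exact Finset.sum_congr rfl fun t _ => by rw [pow_add, pow_one]
    rw [this, geom_sum_eq hz1, hzq]
    simp

/-- Reindexing multiples of `d` in `[1, k]`. -/
lemma sum_multiples_aux {M : Type*} [AddCommMonoid M] (d k : ℕ) (hd : 0 < d) (f : ℕ → M) :
    ∑ m ∈ (Finset.Icc 1 k).filter (fun m => d ∣ m), f m
      = ∑ t ∈ Finset.Icc 1 (k / d), f (d * t) := by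
  apply Finset.sum_nbij' (fun m => m / d) (fun t => d * t)
  · intro m hm
    simp only [Finset.mem_filter, Finset.mem_Icc] at hm
    obtain ⟨⟨h1, h2⟩, hdm⟩ := hm
    simp only [Finset.mem_Icc]
    exact ⟨(Nat.one_le_div_iff hd).mpr (Nat.le_of_dvd h1 hdm), Nat.div_le_div_right h2⟩
  · intro t ht
    simp only [Finset.mem_Icc] at ht
    simp only [Finset.mem_filter, Finset.mem_Icc]
    refine ⟨⟨Nat.one_le_iff_ne_zero.mpr (Nat.mul_ne_zero hd.ne' (by omega)), ?_⟩, Dvd.intro t rfl⟩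
    calc d * t ≤ d * (k / d) := Nat.mul_le_mul_left d ht.2
    _ ≤ k := Nat.mul_div_le k d
  · intro m hm
    simp only [Finset.mem_filter] at hm
    exact Nat.mul_div_cancel' hm.2
  · intro t _
    exact Nat.mul_div_cancel_left t hd
  · intro m hm
    simp only [Finset.mem_filter] at hm
    rw [Nat.mul_div_cancel' hm.2]

lemma moebius_sum_divisors_aux (n : ℕ) :
    ∑ d ∈ n.divisors, ((moebius d : ℤ) : ℂ) = if n = 1 then 1 else 0 := by
  have h := congrArg (fun f : ArithmeticFunction ℂ => f n)
    (coe_moebius_mul_coe_zeta (R := ℂ))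
  simp only [coe_mul_zeta_apply, one_apply, intCoe_apply] at h
  exact h

lemma coprime_indicator_aux (k : ℕ) (hk : 0 < k) (m : ℕ) :
    (if Nat.gcd m k = 1 then (1 : ℂ) else 0)
      = ∑ d ∈ k.divisors.filter (fun d => d ∣ m), ((moebius d : ℤ) : ℂ) := by
  have hset : k.divisors.filter (fun d => d ∣ m) = (Nat.gcd m k).divisors := by
    ext d
    simp only [Finset.mem_filter, Nat.mem_divisors]
    constructor
    · rintro ⟨⟨hdk, _⟩, hdm⟩
      exact ⟨Nat.dvd_gcd hdm hdk, Nat.gcd_ne_zero_right hk.ne'⟩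
    · rintro ⟨hd, _⟩
      exact ⟨⟨hd.trans (Nat.gcd_dvd_right m k), hk.ne'⟩, hd.trans (Nat.gcd_dvd_left m k)⟩
  rw [hset, moebius_sum_divisors_aux]

/-- Ramanujan sum expanded via Möbius. -/
lemma ramanujanSum_eq_aux (k : ℕ) (hk : 0 < k) (j : ℕ) :
    ramanujanSum k (j : ℤ) = ∑ d ∈ k.divisors, ((moebius d : ℤ) : ℂ) *
      (if (k / d) ∣ j then ((k / d : ℕ) : ℂ) else 0) := by
  have hk0 : (k : ℂ) ≠ 0 := Nat.cast_ne_zero.mpr hk.ne'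
  unfold ramanujanSum
  rw [Finset.sum_filter]
  have step1 : ∀ m ∈ Finset.Icc 1 k,
      (if Nat.gcd m k = 1 then
        Complex.exp (2 * (Real.pi : ℂ) * Complex.I * (m : ℂ) * ((j : ℤ) : ℂ) / (k : ℂ)) else 0)
      = ∑ d ∈ k.divisors, (if d ∣ m then ((moebius d : ℤ) : ℂ) *
          Complex.exp (2 * (Real.pi : ℂ) * Complex.I * (m : ℂ) * ((j : ℤ) : ℂ) / (k : ℂ)) else 0) := by
    intro m _
    rw [← Finset.sum_filter]
    rw [← Finset.sum_mul]
    rw [← coprime_indicator_aux k hk m]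
    split_ifs <;> simp
  rw [Finset.sum_congr rfl step1, Finset.sum_comm]
  refine Finset.sum_congr rfl fun d hd => ?_
  obtain ⟨hdk, _⟩ := Nat.mem_divisors.mp hd
  have hd0 : 0 < d := Nat.pos_of_mem_divisors hd
  have hq0 : 0 < k / d := Nat.div_pos (Nat.le_of_dvd hk hdk) hd0
  have hdq : (d : ℂ) * ((k / d : ℕ) : ℂ) = (k : ℂ) := by
    rw [← Nat.cast_mul, Nat.mul_div_cancel' hdk]
  rw [← Finset.sum_filter, sum_multiples_aux d k hd0]
  rw [← geom_sum_exp_aux (k / d) hq0 j, Finset.mul_sum]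
  refine Finset.sum_congr rfl fun t _ => ?_
  congr 1
  have hqc : ((k / d : ℕ) : ℂ) ≠ 0 := Nat.cast_ne_zero.mpr hq0.ne'
  have hdc : (d : ℂ) ≠ 0 := Nat.cast_ne_zero.mpr hd0.ne'
  congr 1
  push_cast
  rw [div_eq_div_iff hk0 hqc]
  linear_combination (2 * (Real.pi:ℂ) * Complex.I * (t:ℂ) * (j:ℂ)) * hdq

theorem weighted_average_ramanujan_sum_moebius (k r : ℕ) (hk : 0 < k) (hr : 0 < r) :
    (1 / (k : ℂ) ^ (r + 1)) * ∑ j ∈ Finset.Icc 1 k, (j : ℂ) ^ r * ramanujanSum k j =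
      ∑ d ∈ k.divisors, ((moebius d : ℂ) / (d : ℂ) ^ (r + 1)) *
        ∑ m ∈ Finset.Icc 1 d, (m : ℂ) ^ r := by
  have hk0 : (k : ℂ) ≠ 0 := Nat.cast_ne_zero.mpr hk.ne'
  have hmain : ∑ j ∈ Finset.Icc 1 k, (j : ℂ) ^ r * ramanujanSum k j
      = ∑ d ∈ k.divisors, ((moebius d : ℤ) : ℂ) *
          (((k / d : ℕ) : ℂ) ^ (r + 1) * ∑ m ∈ Finset.Icc 1 d, (m : ℂ) ^ r) := by
    have h1 : ∀ j ∈ Finset.Icc 1 k, (j : ℂ) ^ r * ramanujanSum k (j : ℤ)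
        = ∑ d ∈ k.divisors, ((moebius d : ℤ) : ℂ) *
            ((j : ℂ) ^ r * (if (k / d) ∣ j then ((k / d : ℕ) : ℂ) else 0)) := by
      intro j _
      rw [ramanujanSum_eq_aux k hk j, Finset.mul_sum]
      exact Finset.sum_congr rfl fun d _ => by ring
    rw [Finset.sum_congr rfl h1, Finset.sum_comm]
    refine Finset.sum_congr rfl fun d hd => ?_
    obtain ⟨hdk, _⟩ := Nat.mem_divisors.mp hd
    have hd0 : 0 < d := Nat.pos_of_mem_divisors hd
    have hq0 : 0 < k / d := Nat.div_pos (Nat.le_of_dvd hk hdk) hd0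
    rw [← Finset.mul_sum]
    congr 1
    have : ∀ j : ℕ, (j : ℂ) ^ r * (if (k / d) ∣ j then ((k / d : ℕ) : ℂ) else 0)
        = if (k / d) ∣ j then (j : ℂ) ^ r * ((k / d : ℕ) : ℂ) else 0 := by
      intro j; split_ifs <;> simp
    simp only [this]
    rw [← Finset.sum_filter, sum_multiples_aux (k / d) k hq0 (fun j => (j : ℂ) ^ r * ((k / d : ℕ) : ℂ))]
    have hkq : k / (k / d) = d := Nat.div_div_self hdk hk.ne'
    rw [hkq, Finset.mul_sum]
    refine Finset.sum_congr rfl fun m _ => ?_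
    push_cast
    ring
  rw [hmain, Finset.mul_sum]
  refine Finset.sum_congr rfl fun d hd => ?_
  obtain ⟨hdk, _⟩ := Nat.mem_divisors.mp hd
  have hd0 : 0 < d := Nat.pos_of_mem_divisors hd
  have hdc : (d : ℂ) ≠ 0 := Nat.cast_ne_zero.mpr hd0.ne'
  have hdq : (d : ℂ) * ((k / d : ℕ) : ℂ) = (k : ℂ) := by
    rw [← Nat.cast_mul, Nat.mul_div_cancel' hdk]
  have hpow : ((k / d : ℕ) : ℂ) ^ (r + 1) * (d : ℂ) ^ (r + 1) = (k : ℂ) ^ (r + 1) := by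
    rw [← mul_pow, mul_comm, hdq]
  have hmu : ((moebius d : ℤ) : ℂ) = (moebius d : ℂ) := by norm_cast
  rw [← hmu]
  have hqc : ((k / d : ℕ) : ℂ) ≠ 0 := by
    have hq0 : 0 < k / d := Nat.div_pos (Nat.le_of_dvd hk hdk) hd0
    exact Nat.cast_ne_zero.mpr hq0.ne'
  rw [← hpow]
  rw [one_div, mul_comm]
  rw [div_eq_mul_inv]
  field_simp
end

section
/- Let f be an arbitrary arithmetic function with complex values. Then for every positive integer k, Σ_{j=1}^{k} f(gcd(j,k)) · c_k(j) = φ(k) · (μ * f)(k), where μ * f denotes the Dirichlet convolution (μ * f)(k) = Σ_{d | k} μ(d) f(k/d). -/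
open Finset ArithmeticFunction

namespace RamanujanAux

/-- The standard primitive `n`-th root of unity. -/
noncomputable def zC (n : ℕ) : ℂ := Complex.exp (2 * (Real.pi : ℂ) * Complex.I / n)

lemma zC_pow_self {n : ℕ} (hn : 0 < n) : zC n ^ n = 1 := by
  have hn0 : (n : ℂ) ≠ 0 := Nat.cast_ne_zero.mpr hn.ne'
  rw [zC, ← Complex.exp_nat_mul]
  rw [show (n : ℂ) * (2 * (Real.pi : ℂ) * Complex.I / n) = 2 * (Real.pi : ℂ) * Complex.I by
    field_simp]
  exact Complex.exp_two_pi_mul_I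

lemma zC_pow_mod {n : ℕ} (hn : 0 < n) (a : ℕ) : zC n ^ (a % n) = zC n ^ a := by
  conv_rhs => rw [← Nat.div_add_mod a n]
  rw [pow_add, pow_mul, zC_pow_self hn, one_pow, one_mul]

lemma zC_pow_dvd {n d : ℕ} (hn : 0 < n) (hd : d ∣ n) (hd0 : 0 < d) :
    zC n ^ d = zC (n / d) := by
  have hn0 : (n : ℂ) ≠ 0 := Nat.cast_ne_zero.mpr hn.ne'
  have hd0' : (d : ℂ) ≠ 0 := Nat.cast_ne_zero.mpr hd0.ne'
  rw [zC, zC, ← Complex.exp_nat_mul]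
  congr 1
  rw [Nat.cast_div hd hd0']
  field_simp

lemma sum_range_zC {n : ℕ} (hn : 0 < n) :
    ∑ m ∈ range n, zC n ^ m = if n = 1 then 1 else 0 := by
  rcases eq_or_lt_of_le (Nat.one_le_iff_ne_zero.mpr hn.ne') with h1 | h1
  · rw [← h1]; simp
  · rw [if_neg h1.ne']
    exact (Complex.isPrimitiveRoot_exp n hn.ne').geom_sum_eq_zero h1

lemma sum_moebius_div {g : ℕ} (hg : g ≠ 0) :
    ∑ d ∈ g.divisors, (moebius d : ℂ) = if g = 1 then 1 else 0 := by
  have h := ArithmeticFunction.coe_moebius_mul_coe_zeta (R := ℂ)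
  have h2 := congrArg (fun F : ArithmeticFunction ℂ => F g) h
  simp only [ArithmeticFunction.coe_mul_zeta_apply, ArithmeticFunction.one_apply,
    ArithmeticFunction.intCoe_apply] at h2
  exact h2

lemma sum_Icc_one_eq_sum_range {M : Type*} [AddCommMonoid M] {n : ℕ} (hn : 0 < n)
    {F : ℕ → M} (hF : F n = F 0) : ∑ m ∈ Icc 1 n, F m = ∑ m ∈ range n, F m := by
  have h1 : ∑ m ∈ Icc 1 n, F m = (∑ m ∈ Ico 1 n, F m) + F n := by
    rw [← Finset.Ico_add_one_right_eq_Icc, Finset.sum_Ico_succ_top hn]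
  have h2 : ∑ m ∈ range n, F m = F 0 + ∑ m ∈ Ico 1 n, F m := by
    rw [Finset.range_eq_Ico, Finset.sum_eq_sum_Ico_succ_bot hn]
  rw [h1, h2, hF, add_comm]

lemma sum_multiples {n d : ℕ} (hd : d ∣ n) (hd0 : 0 < d) (F : ℕ → ℂ) :
    ∑ m ∈ (range n).filter (fun m => d ∣ m), F m = ∑ t ∈ range (n / d), F (d * t) := by
  refine Finset.sum_bij' (fun m _ => m / d) (fun t _ => d * t) ?_ ?_ ?_ ?_ ?_
  · intro m hm
    simp only [mem_filter, mem_range] at hm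
    exact mem_range.mpr (Nat.div_lt_div_of_lt_of_dvd hd hm.1)
  · intro t ht
    rw [mem_range] at ht
    simp only [mem_filter, mem_range]
    refine ⟨?_, Dvd.intro t rfl⟩
    calc d * t < d * (n / d) := (Nat.mul_lt_mul_left hd0).mpr ht
      _ = n := Nat.mul_div_cancel' hd
  · intro m hm
    simp only [mem_filter] at hm
    exact Nat.mul_div_cancel' hm.2
  · intro t ht
    exact Nat.mul_div_cancel_left t hd0
  · intro m hm
    simp only [mem_filter] at hm
    rw [Nat.mul_div_cancel' hm.2]

lemma sum_gcd_fiber {k g : ℕ} (hk : 0 < k) (hg : g ∣ k) (F : ℕ → ℂ) :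
    ∑ j ∈ (range k).filter (fun j => Nat.gcd j k = g), F j
      = ∑ i ∈ (range (k / g)).filter (fun i => Nat.gcd i (k / g) = 1), F (g * i) := by
  have hg0 : 0 < g := Nat.pos_of_dvd_of_pos hg hk
  have hkey : ∀ i, Nat.gcd (g * i) k = g * Nat.gcd i (k / g) := by
    intro i
    conv_lhs => rw [← Nat.mul_div_cancel' hg]
    exact Nat.gcd_mul_left g i (k / g)
  refine Finset.sum_bij' (fun j _ => j / g) (fun i _ => g * i) ?_ ?_ ?_ ?_ ?_
  · intro j hj
    simp only [mem_filter, mem_range] at hj ⊢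
    obtain ⟨hj1, hj2⟩ := hj
    have hgj : g ∣ j := hj2 ▸ Nat.gcd_dvd_left j k
    constructor
    · exact Nat.div_lt_div_of_lt_of_dvd hg hj1
    · have := hkey (j / g)
      rw [Nat.mul_div_cancel' hgj, hj2] at this
      refine Nat.eq_of_mul_eq_mul_left hg0 ?_
      rw [← this, mul_one]
  · intro i hi
    simp only [mem_filter, mem_range] at hi ⊢
    obtain ⟨hi1, hi2⟩ := hi
    constructor
    · calc g * i < g * (k / g) := (Nat.mul_lt_mul_left hg0).mpr hi1
        _ = k := Nat.mul_div_cancel' hg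
    · rw [hkey, hi2, mul_one]
  · intro j hj
    simp only [mem_filter] at hj
    have hgj : g ∣ j := hj.2 ▸ Nat.gcd_dvd_left j k
    exact Nat.mul_div_cancel' hgj
  · intro i _
    exact Nat.mul_div_cancel_left i hg0
  · intro j hj
    simp only [mem_filter] at hj
    have hgj : g ∣ j := hj.2 ▸ Nat.gcd_dvd_left j k
    rw [Nat.mul_div_cancel' hgj]

/-- `c_n(1) = μ(n)`: the sum of the primitive n-th roots of unity is the Möbius function. -/
lemma sum_coprime_zC {n : ℕ} (hn : 0 < n) :
    ∑ i ∈ (range n).filter (fun i => Nat.gcd i n = 1), zC n ^ i = (moebius n : ℂ) := by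
  have hdiv : ∀ i, (Nat.gcd i n).divisors = n.divisors.filter (fun d => d ∣ i) := by
    intro i
    ext d
    simp only [Nat.mem_divisors, mem_filter]
    constructor
    · rintro ⟨hd, -⟩
      exact ⟨⟨hd.trans (Nat.gcd_dvd_right i n), hn.ne'⟩, hd.trans (Nat.gcd_dvd_left i n)⟩
    · rintro ⟨⟨hdn, -⟩, hdi⟩
      refine ⟨Nat.dvd_gcd hdi hdn, fun h => ?_⟩
      exact hn.ne' (Nat.eq_zero_of_gcd_eq_zero_right h)
  calc ∑ i ∈ (range n).filter (fun i => Nat.gcd i n = 1), zC n ^ i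
      = ∑ i ∈ range n, (if Nat.gcd i n = 1 then (1 : ℂ) else 0) * zC n ^ i := by
        rw [sum_filter]
        exact Finset.sum_congr rfl fun i _ => by split <;> simp
    _ = ∑ i ∈ range n, (∑ d ∈ n.divisors.filter (fun d => d ∣ i), (moebius d : ℂ)) * zC n ^ i := by
        refine Finset.sum_congr rfl fun i _ => ?_
        rw [← hdiv i, sum_moebius_div]
        intro h
        exact hn.ne' (Nat.eq_zero_of_gcd_eq_zero_right h)
    _ = ∑ i ∈ range n, ∑ d ∈ n.divisors, (if d ∣ i then (moebius d : ℂ) * zC n ^ i else 0) := by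
        refine Finset.sum_congr rfl fun i _ => ?_
        rw [sum_filter, Finset.sum_mul]
        exact Finset.sum_congr rfl fun d _ => by split <;> simp
    _ = ∑ d ∈ n.divisors, ∑ i ∈ range n, (if d ∣ i then (moebius d : ℂ) * zC n ^ i else 0) :=
        Finset.sum_comm
    _ = ∑ d ∈ n.divisors, (moebius d : ℂ) * ∑ t ∈ range (n / d), zC n ^ (d * t) := by
        refine Finset.sum_congr rfl fun d hd => ?_
        rw [← sum_filter, sum_multiples (Nat.dvd_of_mem_divisors hd)
          (Nat.pos_of_mem_divisors hd), Finset.mul_sum]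
    _ = ∑ d ∈ n.divisors, (moebius d : ℂ) * (if n / d = 1 then 1 else 0) := by
        refine Finset.sum_congr rfl fun d hd => ?_
        congr 1
        have hdvd := Nat.dvd_of_mem_divisors hd
        have hd0 := Nat.pos_of_mem_divisors hd
        calc ∑ t ∈ range (n / d), zC n ^ (d * t)
            = ∑ t ∈ range (n / d), zC (n / d) ^ t := by
              refine Finset.sum_congr rfl fun t _ => ?_
              rw [pow_mul, zC_pow_dvd hn hdvd hd0]
          _ = if n / d = 1 then 1 else 0 := sum_range_zC (Nat.div_pos (Nat.le_of_dvd hn hdvd) hd0)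
    _ = (moebius n : ℂ) := by
        rw [Finset.sum_eq_single n]
        · rw [if_pos (Nat.div_self hn), mul_one]
        · intro d hd hne
          rw [if_neg, mul_zero]
          intro h
          exact hne (Nat.eq_of_dvd_of_div_eq_one (Nat.dvd_of_mem_divisors hd) h ▸ rfl)
        · intro h
          exact absurd (Nat.mem_divisors_self n hn.ne') h

lemma sum_mul_reindex {k : ℕ} (hk : 0 < k) {m : ℕ} (hm : Nat.gcd m k = 1) (f : ℕ → ℂ) :
    ∑ j ∈ range k, f (Nat.gcd j k) * zC k ^ (m * j)
      = ∑ j ∈ range k, f (Nat.gcd j k) * zC k ^ j := by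
  rcases eq_or_lt_of_le (Nat.one_le_iff_ne_zero.mpr hk.ne') with h1 | h1
  · rw [← h1]; simp
  · obtain ⟨m', -, hm'⟩ := Nat.exists_mul_mod_eq_one_of_coprime hm h1
    have hmod : ∀ a b : ℕ, a ≡ b [MOD k] → zC k ^ a = zC k ^ b := by
      intro a b hab
      rw [← zC_pow_mod hk a, ← zC_pow_mod hk b, Nat.ModEq] at *
      rw [hab]
    have hmm' : m * m' ≡ 1 [MOD k] := by
      rwa [Nat.ModEq, Nat.one_mod_eq_one.mpr h1.ne']
    have hgcd : ∀ j, Nat.gcd (m * j % k) k = Nat.gcd j k := by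
      intro j
      rw [← Nat.gcd_rec, Nat.gcd_comm k (m * j), Nat.Coprime.gcd_mul_left_cancel j hm]
    refine Finset.sum_bij' (fun j _ => m * j % k) (fun j _ => m' * j % k) ?_ ?_ ?_ ?_ ?_
    · intro j _; exact mem_range.mpr (Nat.mod_lt _ hk)
    · intro j _; exact mem_range.mpr (Nat.mod_lt _ hk)
    · intro j hj
      rw [mem_range] at hj
      have : m' * (m * j % k) ≡ j [MOD k] := by
        calc m' * (m * j % k) ≡ m' * (m * j) [MOD k] :=
              Nat.ModEq.mul_left m' (Nat.mod_modEq (m * j) k)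
          _ = m * m' * j := by ring
          _ ≡ 1 * j [MOD k] := Nat.ModEq.mul_right j hmm'
          _ = j := one_mul j
      calc m' * (m * j % k) % k = j % k := this
        _ = j := Nat.mod_eq_of_lt hj
    · intro j hj
      rw [mem_range] at hj
      have hm'm : m' * m ≡ 1 [MOD k] := by rwa [mul_comm] at hmm'
      have : m * (m' * j % k) ≡ j [MOD k] := by
        calc m * (m' * j % k) ≡ m * (m' * j) [MOD k] :=
              Nat.ModEq.mul_left m (Nat.mod_modEq (m' * j) k)
          _ = m' * m * j := by ring
          _ ≡ 1 * j [MOD k] := Nat.ModEq.mul_right j (by rwa [mul_comm] at hmm')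
          _ = j := one_mul j
      calc m * (m' * j % k) % k = j % k := this
        _ = j := Nat.mod_eq_of_lt hj
    · intro j _
      rw [hgcd j, zC_pow_mod hk]

end RamanujanAux

open RamanujanAux

theorem gcd_weighted_average_ramanujan_sum (f : ℕ → ℂ) (k : ℕ) (hk : 0 < k) :
    ∑ j ∈ Finset.Icc 1 k, f (Nat.gcd j k) * ramanujanSum k j =
      (Nat.totient k : ℂ) * ∑ d ∈ k.divisors, (moebius d : ℂ) * f (k / d) := by
  have hk0 : (k : ℂ) ≠ 0 := Nat.cast_ne_zero.mpr hk.ne'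
  -- Step 1: rewrite the Ramanujan sum in terms of powers of ζ = zC k, over `range k`.
  have hRS : ∀ j : ℕ, ramanujanSum k (j : ℤ)
      = ∑ m ∈ (range k).filter (fun m => Nat.gcd m k = 1), zC k ^ (m * j) := by
    intro j
    rw [ramanujanSum]
    have hterm : ∀ m : ℕ,
        Complex.exp (2 * (Real.pi : ℂ) * Complex.I * (m : ℂ) * ((j : ℤ) : ℂ) / (k : ℂ))
          = zC k ^ (m * j) := by
      intro m
      rw [zC, ← Complex.exp_nat_mul]
      congr 1
      push_cast
      ring
    rw [Finset.sum_congr rfl (fun m _ => hterm m), Finset.sum_filter, Finset.sum_filter]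
    refine sum_Icc_one_eq_sum_range hk ?_
    have hz : zC k ^ (k * j) = zC k ^ (0 * j) := by
      rw [pow_mul, zC_pow_self hk, one_pow, zero_mul, pow_zero]
    simp only [Nat.gcd_self, Nat.gcd_zero_left, hz]
  -- Step 2: LHS as a double sum over `range k`.
  have step2 : ∑ j ∈ Finset.Icc 1 k, f (Nat.gcd j k) * ramanujanSum k j
      = ∑ m ∈ (range k).filter (fun m => Nat.gcd m k = 1),
          ∑ j ∈ range k, f (Nat.gcd j k) * zC k ^ (m * j) := by
    rw [Finset.sum_congr rfl (fun j _ => by rw [hRS j])]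
    rw [sum_Icc_one_eq_sum_range hk (by
      simp only [Nat.gcd_self, Nat.gcd_zero_left]
      congr 1
      refine Finset.sum_congr rfl fun m _ => ?_
      rw [mul_comm m k, pow_mul, zC_pow_self hk, one_pow, mul_zero, pow_zero])]
    rw [Finset.sum_congr rfl (fun j _ => Finset.mul_sum _ _ _)]
    exact Finset.sum_comm
  rw [step2]
  -- Step 3: each inner sum is independent of m.
  rw [Finset.sum_congr rfl (fun m hm => sum_mul_reindex hk (Finset.mem_filter.mp hm).2 f)]
  rw [Finset.sum_const]
  -- Step 4: the cardinality is the totient.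
  have hcard : ((range k).filter (fun m => Nat.gcd m k = 1)).card = Nat.totient k := by
    rw [Nat.totient]
    congr 1
    refine Finset.filter_congr fun m _ => ?_
    simp [Nat.Coprime, Nat.gcd_comm]
  rw [hcard, nsmul_eq_mul]
  congr 1
  -- Step 5: compute S = ∑_j f(gcd(j,k)) ζ^j by grouping according to g = gcd(j,k).
  have hmaps : ∀ j ∈ range k, Nat.gcd j k ∈ k.divisors :=
    fun j _ => Nat.mem_divisors.mpr ⟨Nat.gcd_dvd_right j k, hk.ne'⟩
  rw [← Finset.sum_fiberwise_of_maps_to hmaps (fun j => f (Nat.gcd j k) * zC k ^ j)]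
  have step5 : ∀ g ∈ k.divisors,
      ∑ j ∈ (range k).filter (fun j => Nat.gcd j k = g), f (Nat.gcd j k) * zC k ^ j
        = (moebius (k / g) : ℂ) * f g := by
    intro g hg
    have hgdvd := Nat.dvd_of_mem_divisors hg
    have hg0 := Nat.pos_of_mem_divisors hg
    calc ∑ j ∈ (range k).filter (fun j => Nat.gcd j k = g), f (Nat.gcd j k) * zC k ^ j
        = ∑ j ∈ (range k).filter (fun j => Nat.gcd j k = g), f g * zC k ^ j := by
          refine Finset.sum_congr rfl fun j hj => ?_
          rw [(Finset.mem_filter.mp hj).2]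
      _ = f g * ∑ j ∈ (range k).filter (fun j => Nat.gcd j k = g), zC k ^ j := by
          rw [Finset.mul_sum]
      _ = f g * ∑ i ∈ (range (k / g)).filter (fun i => Nat.gcd i (k / g) = 1),
            zC (k / g) ^ i := by
          rw [sum_gcd_fiber hk hgdvd]
          congr 1
          refine Finset.sum_congr rfl fun i _ => ?_
          rw [pow_mul, zC_pow_dvd hk hgdvd hg0]
      _ = f g * (moebius (k / g) : ℂ) := by
          rw [sum_coprime_zC (Nat.div_pos (Nat.le_of_dvd hk hgdvd) hg0)]
      _ = (moebius (k / g) : ℂ) * f g := mul_comm _ _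
  rw [Finset.sum_congr rfl step5]
  -- Step 6: reindex divisors g ↦ k / g.
  rw [← Nat.sum_div_divisors k (fun d => (moebius (k / d) : ℂ) * f d)]
  refine Finset.sum_congr rfl fun d hd => ?_
  rw [Nat.div_div_self (Nat.dvd_of_mem_divisors hd) hk.ne']
end

section
/- For every positive integer k, Σ_{j=1}^{k} gcd(j,k) · c_k(j) = (φ(k))^2, where φ is Euler's totient function. -/
open Finset ArithmeticFunction

/-- Geometric sum of a nontrivial root of unity over `Icc 1 n` vanishes. -/
lemma aux_geom {x : ℂ} {n : ℕ} (hx : x ^ n = 1) (hx1 : x ≠ 1) :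
    ∑ t ∈ Finset.Icc 1 n, x ^ t = 0 := by
  have h : Finset.Icc 1 n = Finset.Ico 1 (n + 1) := by rw [Finset.Ico_add_one_right_eq_Icc]
  rw [h, Finset.sum_Ico_eq_sum_range]
  simp only [pow_add, pow_one, Nat.add_sub_cancel]
  rw [← Finset.mul_sum, geom_sum_eq hx1, hx]
  simp

/-- For `m` coprime to `k`, the gcd-weighted exponential sum equals `φ(k)`. -/
lemma aux_inner (k m : ℕ) (hk : 0 < k) (hm : Nat.gcd m k = 1) :
    ∑ j ∈ Finset.Icc 1 k, (Nat.gcd j k : ℂ) *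
      Complex.exp (2 * (Real.pi : ℂ) * Complex.I * (m : ℂ) * (j : ℂ) / (k : ℂ))
      = (Nat.totient k : ℂ) := by
  have hk0 : (k : ℂ) ≠ 0 := Nat.cast_ne_zero.mpr hk.ne'
  set w : ℂ := Complex.exp (2 * (Real.pi : ℂ) * Complex.I * (m : ℂ) / (k : ℂ)) with hw
  have hwj : ∀ j : ℕ,
      Complex.exp (2 * (Real.pi : ℂ) * Complex.I * (m : ℂ) * (j : ℂ) / (k : ℂ)) = w ^ j := by
    intro j
    rw [hw, ← Complex.exp_nat_mul]
    congr 1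
    field_simp
  have hwk : w ^ k = 1 := by
    rw [← hwj]
    have : 2 * (Real.pi : ℂ) * Complex.I * (m : ℂ) * (k : ℂ) / (k : ℂ)
        = (m : ℤ) * (2 * (Real.pi : ℂ) * Complex.I) := by
      rw [mul_div_assoc, div_self hk0, mul_one]; push_cast; ring
    rw [this, Complex.exp_int_mul_two_pi_mul_I]
  have hgcd : ∀ j ∈ Finset.Icc 1 k, (Nat.gcd j k : ℂ)
      = ∑ d ∈ k.divisors.filter (fun d => d ∣ j), (Nat.totient d : ℂ) := by
    intro j hj
    have hdiv : (Nat.gcd j k).divisors = k.divisors.filter (fun d => d ∣ j) := by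
      ext d
      simp only [Nat.mem_divisors, Finset.mem_filter, Nat.dvd_gcd_iff]
      constructor
      · rintro ⟨⟨h1, h2⟩, -⟩; exact ⟨⟨h2, hk.ne'⟩, h1⟩
      · rintro ⟨⟨h2, -⟩, h1⟩
        exact ⟨⟨h1, h2⟩, Nat.gcd_ne_zero_right hk.ne'⟩
    have := Nat.sum_totient (Nat.gcd j k)
    rw [hdiv] at this
    exact_mod_cast this.symm
  have key : ∀ d ∈ k.divisors,
      ∑ j ∈ (Finset.Icc 1 k).filter (fun j => d ∣ j), w ^ j = if d = k then 1 else 0 := by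
    intro d hd
    obtain ⟨⟨n, hn⟩, -⟩ := Nat.mem_divisors.mp hd
    have hd0 : 0 < d := Nat.pos_of_mem_divisors hd
    have hn0 : 0 < n := by
      rcases Nat.eq_zero_or_pos n with rfl | h
      · exfalso; rw [Nat.mul_zero] at hn; omega
      · exact h
    have hre : ∑ j ∈ (Finset.Icc 1 k).filter (fun j => d ∣ j), w ^ j
        = ∑ t ∈ Finset.Icc 1 n, (w ^ d) ^ t := by
      refine Finset.sum_nbij' (fun j => j / d) (fun t => d * t) ?_ ?_ ?_ ?_ ?_
      · intro j hj
        obtain ⟨hj1, hj2⟩ := Finset.mem_filter.mp hj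
        obtain ⟨hja, hjb⟩ := Finset.mem_Icc.mp hj1
        refine Finset.mem_Icc.mpr ⟨?_, ?_⟩
        · exact (Nat.one_le_div_iff hd0).mpr (Nat.le_of_dvd (by omega) hj2)
        · calc j / d ≤ (d * n) / d := Nat.div_le_div_right (hn ▸ hjb)
            _ = n := Nat.mul_div_cancel_left n hd0
      · intro t ht
        obtain ⟨ht1, ht2⟩ := Finset.mem_Icc.mp ht
        refine Finset.mem_filter.mpr ⟨Finset.mem_Icc.mpr ⟨by nlinarith, by nlinarith⟩, ⟨t, rfl⟩⟩
      · intro j hj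
        exact Nat.mul_div_cancel' (Finset.mem_filter.mp hj).2
      · intro t ht
        exact Nat.mul_div_cancel_left t hd0
      · intro j hj
        rw [← pow_mul, Nat.mul_div_cancel' (Finset.mem_filter.mp hj).2]
    rw [hre]
    by_cases hdk : d = k
    · subst hdk
      have hn1 : n = 1 := by nlinarith
      subst hn1
      simpa using hwk
    · rw [if_neg hdk]
      have hn1 : 1 < n := by
        rcases Nat.lt_or_ge 1 n with h | h
        · exact h
        · exfalso; interval_cases n <;> omega
      apply aux_geom
      · rw [← pow_mul, ← hn, hwk]
      · intro hcon
        rw [hw, ← Complex.exp_nat_mul, Complex.exp_eq_one_iff] at hcon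
        obtain ⟨z, hz⟩ := hcon
        have h2 : (m : ℂ) * d = z * k := by
          field_simp at hz
          linear_combination hz
        have h3 : (m : ℤ) * d = z * k := by exact_mod_cast h2
        have hdvd : (k : ℕ) ∣ m * d := by
          have : (k : ℤ) ∣ (m : ℤ) * d := ⟨z, by rw [h3, mul_comm]⟩
          exact_mod_cast this
        have hnd : n ∣ m := by
          rw [hn, mul_comm m d] at hdvd
          exact (mul_dvd_mul_iff_left hd0.ne').mp hdvd
        have : n ∣ Nat.gcd m k := Nat.dvd_gcd hnd (hn ▸ dvd_mul_left n d)
        rw [hm, Nat.dvd_one] at this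
        omega
  calc ∑ j ∈ Finset.Icc 1 k, (Nat.gcd j k : ℂ) *
        Complex.exp (2 * (Real.pi : ℂ) * Complex.I * (m : ℂ) * (j : ℂ) / (k : ℂ))
      = ∑ j ∈ Finset.Icc 1 k, ∑ d ∈ k.divisors,
          (if d ∣ j then (Nat.totient d : ℂ) * w ^ j else 0) := by
        refine Finset.sum_congr rfl fun j hj => ?_
        rw [hgcd j hj, hwj, Finset.sum_mul, Finset.sum_filter]
    _ = ∑ d ∈ k.divisors, ∑ j ∈ Finset.Icc 1 k,
          (if d ∣ j then (Nat.totient d : ℂ) * w ^ j else 0) := Finset.sum_comm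
    _ = ∑ d ∈ k.divisors, (Nat.totient d : ℂ) *
          ∑ j ∈ (Finset.Icc 1 k).filter (fun j => d ∣ j), w ^ j := by
        refine Finset.sum_congr rfl fun d _ => ?_
        rw [Finset.mul_sum, Finset.sum_filter]
    _ = ∑ d ∈ k.divisors, (Nat.totient d : ℂ) * (if d = k then 1 else 0) := by
        refine Finset.sum_congr rfl fun d hd => ?_
        rw [key d hd]
    _ = (Nat.totient k : ℂ) := by
        simp only [mul_ite, mul_one, mul_zero]
        rw [Finset.sum_ite_eq' k.divisors k (fun d => (Nat.totient d : ℂ))]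
        simp [Nat.mem_divisors, hk.ne']

/-- The number of `m ∈ [1, k]` coprime to `k` is `φ(k)`. -/
lemma aux_card (k : ℕ) (hk : 0 < k) :
    ((Finset.Icc 1 k).filter (fun m => Nat.gcd m k = 1)).card = Nat.totient k := by
  rcases eq_or_lt_of_le (show 1 ≤ k from hk) with h | h
  · simp [← h]
  · rw [Nat.totient_eq_card_coprime]
    congr 1
    ext m
    simp only [Finset.mem_filter, Finset.mem_Icc, Finset.mem_range, Nat.Coprime]
    constructor
    · rintro ⟨⟨h1, h2⟩, h3⟩
      refine ⟨lt_of_le_of_ne h2 ?_, by rwa [Nat.gcd_comm]⟩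
      rintro rfl
      rw [Nat.gcd_self] at h3; omega
    · rintro ⟨h1, h2⟩
      refine ⟨⟨?_, h1.le⟩, by rwa [Nat.gcd_comm]⟩
      rcases Nat.eq_zero_or_pos m with rfl | hm
      · rw [Nat.gcd_zero_right] at h2; omega
      · exact hm

theorem gcd_weighted_ramanujan_sum_eq_totient_sq (k : ℕ) (hk : 0 < k) :
    ∑ j ∈ Finset.Icc 1 k, (Nat.gcd j k : ℂ) * ramanujanSum k j =
      ((Nat.totient k : ℂ)) ^ 2 := by
  have step : ∑ j ∈ Finset.Icc 1 k, (Nat.gcd j k : ℂ) * ramanujanSum k j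
      = ∑ m ∈ (Finset.Icc 1 k).filter (fun m => Nat.gcd m k = 1),
          ∑ j ∈ Finset.Icc 1 k, (Nat.gcd j k : ℂ) *
            Complex.exp (2 * (Real.pi : ℂ) * Complex.I * (m : ℂ) * (j : ℂ) / (k : ℂ)) := by
    rw [Finset.sum_comm]
    refine Finset.sum_congr rfl fun j _ => ?_
    rw [ramanujanSum, Finset.mul_sum]
    refine Finset.sum_congr rfl fun m _ => ?_
    push_cast
    ring_nf
  rw [step]
  rw [Finset.sum_congr rfl fun m hm => aux_inner k m hk (Finset.mem_filter.mp hm).2]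
  rw [Finset.sum_const, aux_card k hk, nsmul_eq_mul, sq]
end

section
/- For every positive integer k, Σ_{j=1}^{k} τ(gcd(j,k)) · c_k(j) = φ(k), where τ(n) is the number of divisors of n and φ is Euler's totient function. -/
open Finset ArithmeticFunction

lemma sum_exp_eq (n : ℕ) (hn : 0 < n) (m : ℕ) :
    ∑ t ∈ Finset.Icc 1 n, Complex.exp (2 * (Real.pi : ℂ) * Complex.I * m * t / n)
      = if n ∣ m then (n : ℂ) else 0 := by
  have hn0 : (n : ℂ) ≠ 0 := Nat.cast_ne_zero.mpr hn.ne'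
  set z : ℂ := Complex.exp (2 * (Real.pi : ℂ) * Complex.I * m / n) with hzdef
  have hz : ∀ t : ℕ, Complex.exp (2 * (Real.pi : ℂ) * Complex.I * m * t / n) = z ^ t := by
    intro t
    rw [hzdef, ← Complex.exp_nat_mul]
    congr 1
    ring
  have hzn : z ^ n = 1 := by
    rw [← hz n, show 2 * (Real.pi : ℂ) * Complex.I * m * n / n = (m : ℂ) * (2 * Real.pi * Complex.I) by field_simp]
    exact Complex.exp_nat_mul_two_pi_mul_I m
  have hsum : ∑ t ∈ Finset.Icc 1 n, Complex.exp (2 * (Real.pi : ℂ) * Complex.I * m * t / n)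
      = ∑ t ∈ Finset.Icc 1 n, z ^ t := Finset.sum_congr rfl fun t _ => hz t
  rw [hsum]
  have h2 : (2 * (Real.pi : ℂ) * Complex.I) ≠ 0 := by
    simp [Real.pi_ne_zero, Complex.I_ne_zero]
  by_cases h : n ∣ m
  · obtain ⟨c, hc⟩ := h
    have hz1 : z = 1 := by
      rw [hzdef, show 2 * (Real.pi : ℂ) * Complex.I * m / n = (c : ℂ) * (2 * Real.pi * Complex.I) by
        rw [hc]; push_cast; field_simp]
      exact Complex.exp_nat_mul_two_pi_mul_I c
    simp [hz1, Nat.card_Icc, hc]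
  · have hz1 : z ≠ 1 := by
      intro heq
      obtain ⟨c, hcc⟩ := Complex.exp_eq_one_iff.mp heq
      apply h
      have h4 : (2 * (Real.pi : ℂ) * Complex.I) * ((m : ℂ) / n)
          = (2 * (Real.pi : ℂ) * Complex.I) * c := by linear_combination hcc
      have h5 : (m : ℂ) / n = c := mul_left_cancel₀ h2 h4
      rw [div_eq_iff hn0] at h5
      have h7 : (m : ℤ) = c * n := by exact_mod_cast h5
      exact Int.natCast_dvd_natCast.mp ⟨c, by rw [h7]; ring⟩
    rw [show Finset.Icc 1 n = Finset.Ico 1 (n + 1) by rfl, Finset.sum_Ico_eq_sum_range]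
    simp only [Nat.add_sub_cancel]
    have hpw : ∀ i, z ^ (1 + i) = z * z ^ i := fun i => by rw [pow_add, pow_one]
    rw [Finset.sum_congr rfl fun i _ => hpw i, ← Finset.mul_sum, geom_sum_eq hz1, hzn]
    simp [h]



lemma sum_exp_dvd (k : ℕ) (hk : 0 < k) (m : ℕ) (hm : Nat.gcd m k = 1)
    (d : ℕ) (hd : d ∈ k.divisors) :
    ∑ j ∈ (Finset.Icc 1 k).filter (fun j => d ∣ j),
      Complex.exp (2 * (Real.pi : ℂ) * Complex.I * m * j / k)
      = if d = k then 1 else 0 := by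
  obtain ⟨hdk, hk0⟩ := Nat.mem_divisors.mp hd
  have hdpos : 0 < d := Nat.pos_of_mem_divisors hd
  set n := k / d with hn
  have hkdn : k = d * n := (Nat.div_mul_cancel hdk).symm.trans (mul_comm _ _)
  have hnpos : 0 < n := Nat.div_pos (Nat.le_of_dvd hk hdk) hdpos
  have himg : (Finset.Icc 1 k).filter (fun j => d ∣ j)
      = (Finset.Icc 1 n).image (fun t => d * t) := by
    ext j
    simp only [Finset.mem_filter, Finset.mem_Icc, Finset.mem_image]
    constructor
    · rintro ⟨⟨h1, h2⟩, t, rfl⟩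
      have ht0 : t ≠ 0 := by rintro rfl; simp at h1
      exact ⟨t, ⟨Nat.one_le_iff_ne_zero.mpr ht0,
        by rw [hkdn] at h2; exact Nat.le_of_mul_le_mul_left h2 hdpos⟩, rfl⟩
    · rintro ⟨t, ⟨h1, h2⟩, rfl⟩
      exact ⟨⟨Nat.one_le_iff_ne_zero.mpr (by positivity),
        by rw [hkdn]; exact Nat.mul_le_mul_left d h2⟩, ⟨t, rfl⟩⟩
  rw [himg, Finset.sum_image (fun a _ b _ h => Nat.eq_of_mul_eq_mul_left hdpos h)]
  have harg : ∀ t : ℕ, Complex.exp (2 * (Real.pi : ℂ) * Complex.I * m * (d * t : ℕ) / k)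
      = Complex.exp (2 * (Real.pi : ℂ) * Complex.I * m * t / n) := by
    intro t
    congr 1
    rw [hkdn]
    have hd0 : (d : ℂ) ≠ 0 := Nat.cast_ne_zero.mpr hdpos.ne'
    have hn0 : (n : ℂ) ≠ 0 := Nat.cast_ne_zero.mpr hnpos.ne'
    push_cast
    field_simp
  rw [Finset.sum_congr rfl fun t _ => harg t, sum_exp_eq n hnpos m]
  by_cases hdk' : d = k
  · have hn1 : n = 1 := by rw [hn, hdk', Nat.div_self hk]
    simp [hn1, hdk']
  · have : ¬ n ∣ m := by
      intro hnm
      have hnk : n ∣ k := ⟨d, by rw [hkdn, mul_comm]⟩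
      have hng : n ∣ Nat.gcd m k := Nat.dvd_gcd hnm hnk
      rw [hm] at hng
      have hn1 : n = 1 := Nat.eq_one_of_dvd_one hng
      exact hdk' (show d = k by rw [hkdn, hn1, mul_one])
    simp [this, hdk']

lemma rs_inner_sum (k : ℕ) (hk : 0 < k) (m : ℕ) (hm : Nat.gcd m k = 1) :
    ∑ j ∈ Finset.Icc 1 k, ((Nat.gcd j k).divisors.card : ℂ) *
      Complex.exp (2 * (Real.pi : ℂ) * Complex.I * m * j / k) = 1 := by
  have hstep : ∀ j ∈ Finset.Icc 1 k,
      ((Nat.gcd j k).divisors.card : ℂ) *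
        Complex.exp (2 * (Real.pi : ℂ) * Complex.I * m * j / k)
      = ∑ d ∈ k.divisors, if d ∣ j then
          Complex.exp (2 * (Real.pi : ℂ) * Complex.I * m * j / k) else 0 := by
    intro j hj
    have hj1 : 1 ≤ j := (Finset.mem_Icc.mp hj).1
    have hgcd : (Nat.gcd j k).divisors = k.divisors.filter (fun d => d ∣ j) := by
      ext d
      simp only [Nat.mem_divisors, Finset.mem_filter, Nat.dvd_gcd_iff]
      constructor
      · rintro ⟨⟨h1, h2⟩, -⟩; exact ⟨⟨h2, hk.ne'⟩, h1⟩
      · rintro ⟨⟨h1, h2⟩, h3⟩; exact ⟨⟨h3, h1⟩, Nat.gcd_ne_zero_right hk.ne'⟩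
    rw [hgcd, Finset.sum_ite, Finset.sum_const_zero, add_zero, Finset.sum_const,
      nsmul_eq_mul]
  rw [Finset.sum_congr rfl hstep, Finset.sum_comm]
  have : ∀ d ∈ k.divisors,
      (∑ j ∈ Finset.Icc 1 k, if d ∣ j then
        Complex.exp (2 * (Real.pi : ℂ) * Complex.I * m * j / k) else 0)
      = if d = k then (1 : ℂ) else 0 := by
    intro d hd
    rw [← Finset.sum_filter]
    exact sum_exp_dvd k hk m hm d hd
  rw [Finset.sum_congr rfl this, Finset.sum_ite_eq' k.divisors k (fun _ => (1:ℂ))]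
  simp [Nat.mem_divisors, hk.ne']

theorem tau_gcd_weighted_ramanujan_sum (k : ℕ) (hk : 0 < k) :
    ∑ j ∈ Finset.Icc 1 k, ((Nat.gcd j k).divisors.card : ℂ) * ramanujanSum k j =
      (Nat.totient k : ℂ) := by
  unfold ramanujanSum
  have hswap : ∑ j ∈ Finset.Icc 1 k, ((Nat.gcd j k).divisors.card : ℂ) *
      ∑ m ∈ (Finset.Icc 1 k).filter (fun m => Nat.gcd m k = 1),
        Complex.exp (2 * (Real.pi : ℂ) * Complex.I * (m : ℂ) * ((j : ℤ) : ℂ) / (k : ℂ))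
      = ∑ m ∈ (Finset.Icc 1 k).filter (fun m => Nat.gcd m k = 1),
          ∑ j ∈ Finset.Icc 1 k, ((Nat.gcd j k).divisors.card : ℂ) *
            Complex.exp (2 * (Real.pi : ℂ) * Complex.I * m * j / k) := by
    simp_rw [Finset.mul_sum]
    rw [Finset.sum_comm]
    push_cast
    rfl
  rw [hswap]
  have hone : ∀ m ∈ (Finset.Icc 1 k).filter (fun m => Nat.gcd m k = 1),
      ∑ j ∈ Finset.Icc 1 k, ((Nat.gcd j k).divisors.card : ℂ) *
        Complex.exp (2 * (Real.pi : ℂ) * Complex.I * m * j / k) = 1 := by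
    intro m hm
    exact rs_inner_sum k hk m (Finset.mem_filter.mp hm).2
  rw [Finset.sum_congr rfl hone, Finset.sum_const, nsmul_eq_mul, mul_one]
  congr 1
  have : (Finset.Icc 1 k).filter (fun m => Nat.gcd m k = 1)
      = (Finset.Ico 1 (1 + k)).filter (fun m => k.Coprime m) := by
    rw [show Finset.Icc 1 k = Finset.Ico 1 (k + 1) by rfl, add_comm]
    apply Finset.filter_congr
    intro x _
    simp [Nat.Coprime, Nat.gcd_comm]
  rw [this, Nat.filter_coprime_Ico_eq_totient]
end

section
/- For every positive integer k, Σ_{j=1}^{k} σ(gcd(j,k)) · c_k(j) = k · φ(k), where σ(n) is the sum of divisors of n and φ is Euler's totient function. -/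
open Finset ArithmeticFunction

theorem sigma_gcd_weighted_ramanujan_sum (k : ℕ) (hk : 0 < k) :
    ∑ j ∈ Finset.Icc 1 k, ((∑ d ∈ (Nat.gcd j k).divisors, d : ℕ) : ℂ) * ramanujanSum k j =
      (k : ℂ) * (Nat.totient k : ℂ) := by
  set ζω : ℂ := Complex.exp (2 * (Real.pi : ℂ) * Complex.I / k) with hζω_def
  have hprim : IsPrimitiveRoot ζω k := Complex.isPrimitiveRoot_exp k hk.ne'
  have hζωk : ζω ^ k = 1 := hprim.pow_eq_one
  set M := (Finset.Icc 1 k).filter (fun m => Nat.gcd m k = 1) with hM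
  have hexp : ∀ (m j : ℕ),
      Complex.exp (2 * (Real.pi : ℂ) * Complex.I * (m : ℂ) * ((j : ℤ) : ℂ) / (k : ℂ))
        = ζω ^ (m * j) := by
    intro m j
    rw [hζω_def, ← Complex.exp_nat_mul]
    congr 1
    push_cast
    ring
  have h1 : ∀ j ∈ Finset.Icc 1 k, ramanujanSum k j = ∑ m ∈ M, ζω ^ (m * j) := by
    intro j _
    exact Finset.sum_congr rfl fun m _ => hexp m j
  have h2 : ∀ j ∈ Finset.Icc 1 k,
      ((∑ d ∈ (Nat.gcd j k).divisors, d : ℕ) : ℂ)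
        = ∑ d ∈ k.divisors, (if d ∣ j then (d : ℂ) else 0) := by
    intro j _
    rw [← Finset.sum_filter]
    push_cast
    apply Finset.sum_congr _ fun _ _ => rfl
    ext d
    simp only [Nat.mem_divisors, Finset.mem_filter, Nat.dvd_gcd_iff]
    have : Nat.gcd j k ≠ 0 := Nat.gcd_ne_zero_right hk.ne'
    have hk' : k ≠ 0 := hk.ne'
    tauto
  have key : ∀ d ∈ k.divisors, ∀ m ∈ M,
      (∑ j ∈ (Finset.Icc 1 k).filter (fun j => d ∣ j), ζω ^ (m * j))
        = if d = k then 1 else 0 := by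
    intro d hd m hm
    obtain ⟨hdk, hk0⟩ := Nat.mem_divisors.mp hd
    have hd0 : 0 < d := Nat.pos_of_dvd_of_pos hdk hk
    have himg : (Finset.Icc 1 k).filter (fun j => d ∣ j)
        = (Finset.Icc 1 (k / d)).image (fun t => d * t) := by
      ext j
      simp only [Finset.mem_filter, Finset.mem_Icc, Finset.mem_image]
      constructor
      · rintro ⟨⟨hj1, hj2⟩, t, rfl⟩
        refine ⟨t, ⟨?_, (Nat.le_div_iff_mul_le hd0).mpr (by rwa [mul_comm])⟩, rfl⟩
        rcases Nat.eq_zero_or_pos t with rfl | h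
        · simp at hj1
        · exact h
      · rintro ⟨t, ⟨ht1, ht2⟩, rfl⟩
        refine ⟨⟨Nat.one_le_iff_ne_zero.mpr (by positivity), ?_⟩, ⟨t, rfl⟩⟩
        calc d * t ≤ d * (k / d) := Nat.mul_le_mul_left d ht2
        _ = k := Nat.mul_div_cancel' hdk
    rw [himg, Finset.sum_image (fun a _ b _ h => by
      exact Nat.eq_of_mul_eq_mul_left hd0 h)]
    have hrw : ∀ t, ζω ^ (m * (d * t)) = (ζω ^ (m * d)) ^ t := by
      intro t
      rw [← pow_mul, mul_assoc]
    set z := ζω ^ (m * d) with hz_def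
    have hzn : z ^ (k / d) = 1 := by
      rw [hz_def, ← pow_mul, mul_assoc, Nat.mul_div_cancel' hdk, mul_comm m k, pow_mul, hζωk, one_pow]
    by_cases hdk' : d = k
    · subst hdk'
      rw [if_pos rfl, Nat.div_self hk, Finset.Icc_self, Finset.sum_singleton, hrw, pow_one]
      rwa [Nat.div_self hk, pow_one] at hzn
    · rw [if_neg hdk']
      have hz1 : z ≠ 1 := by
        intro h
        have hkmd : k ∣ m * d := (hprim.pow_eq_one_iff_dvd (m * d)).mp h
        have hco : Nat.Coprime k m := Nat.Coprime.symm ((Finset.mem_filter.mp hm).2)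
        have : k ∣ d := hco.dvd_of_dvd_mul_left hkmd
        exact hdk' (Nat.dvd_antisymm hdk this)
      calc (∑ t ∈ Finset.Icc 1 (k / d), ζω ^ (m * (d * t)))
          = ∑ t ∈ Finset.Ico 1 (k / d + 1), z ^ t := by
            rw [← Finset.Ico_add_one_right_eq_Icc]
            exact Finset.sum_congr rfl fun t _ => hrw t
        _ = (z ^ (k / d + 1) - z ^ 1) / (z - 1) := geom_sum_Ico hz1 (Nat.le_add_left 1 _)
        _ = 0 := by rw [pow_succ, hzn, one_mul, pow_one, sub_self, zero_div]
  have hcard : M.card = k.totient := by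
    rw [← Nat.filter_coprime_Ico_eq_totient k 1]
    congr 1
    ext m
    simp only [hM, Finset.mem_filter, Finset.mem_Icc, Finset.mem_Ico]
    rw [Nat.gcd_comm]
    constructor
    · rintro ⟨⟨a, b⟩, c⟩; exact ⟨⟨a, by omega⟩, c⟩
    · rintro ⟨⟨a, b⟩, c⟩; exact ⟨⟨a, by omega⟩, c⟩
  calc ∑ j ∈ Finset.Icc 1 k, ((∑ d ∈ (Nat.gcd j k).divisors, d : ℕ) : ℂ) * ramanujanSum k j
      = ∑ j ∈ Finset.Icc 1 k, ∑ d ∈ k.divisors, ∑ m ∈ M,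
          (if d ∣ j then (d : ℂ) else 0) * ζω ^ (m * j) := by
        refine Finset.sum_congr rfl fun j hj => ?_
        rw [h1 j hj, h2 j hj, Finset.sum_mul]
        exact Finset.sum_congr rfl fun d _ => by rw [Finset.mul_sum]
    _ = ∑ d ∈ k.divisors, ∑ m ∈ M, ∑ j ∈ Finset.Icc 1 k,
          (if d ∣ j then (d : ℂ) else 0) * ζω ^ (m * j) := by
        rw [Finset.sum_comm]
        exact Finset.sum_congr rfl fun d _ => Finset.sum_comm
    _ = ∑ d ∈ k.divisors, ∑ m ∈ M, (d : ℂ) * (if d = k then 1 else 0) := by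
        refine Finset.sum_congr rfl fun d hd => Finset.sum_congr rfl fun m hm => ?_
        rw [← key d hd m hm, Finset.mul_sum, Finset.sum_filter]
        exact Finset.sum_congr rfl fun j _ => by rw [ite_mul, zero_mul]
    _ = ∑ d ∈ k.divisors, (if d = k then (d : ℂ) * M.card else 0) := by
        refine Finset.sum_congr rfl fun d _ => ?_
        rw [Finset.sum_const, nsmul_eq_mul]
        by_cases h : d = k <;> simp [h, mul_comm]
    _ = (k : ℂ) * (Nat.totient k : ℂ) := by
        rw [Finset.sum_ite_eq' k.divisors k (fun d => (d : ℂ) * M.card),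
          if_pos (Nat.mem_divisors_self k hk.ne'), hcard]
end

section
/- For every positive integer k > 1, Σ_{d | k} (μ(d)/d) · log d = −(φ(k)/k) · Σ_{p | k, p prime} (log p)/(p − 1), where μ is the Möbius function and φ is Euler's totient function. -/
open Finset ArithmeticFunction

private lemma moebius_prod_primes (S : Finset ℕ) (hS : ∀ p ∈ S, p.Prime) :
    ((moebius (∏ p ∈ S, p) : ℝ)) / ((∏ p ∈ S, p : ℕ) : ℝ) = ∏ p ∈ S, (-(p : ℝ)⁻¹) := by
  classical
  induction S using Finset.induction_on with
  | empty => simp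
  | @insert a s ha ih =>
    have hprime : ∀ p ∈ s, p.Prime := fun p hp => hS p (Finset.mem_insert_of_mem hp)
    have haP : a.Prime := hS a (Finset.mem_insert_self a s)
    have hcop : Nat.Coprime a (∏ p ∈ s, p) := by
      apply Nat.Coprime.prod_right
      intro q hq
      exact (Nat.coprime_primes haP (hprime q hq)).mpr (by rintro rfl; exact ha hq)
    have hmul : moebius (a * ∏ p ∈ s, p) = moebius a * moebius (∏ p ∈ s, p) :=
      isMultiplicative_moebius.map_mul_of_coprime hcop
    have hprod_ne : ((∏ p ∈ s, p : ℕ) : ℝ) ≠ 0 := by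
      have : (∏ p ∈ s, p : ℕ) ≠ 0 :=
        Finset.prod_ne_zero_iff.mpr fun p hp => (hprime p hp).ne_zero
      exact_mod_cast this
    have ha_ne : (a : ℝ) ≠ 0 := by exact_mod_cast haP.ne_zero
    rw [Finset.prod_insert ha, hmul, moebius_apply_prime haP,
      Finset.prod_insert (f := fun p : ℕ => -(p : ℝ)⁻¹) ha, ← ih hprime]
    push_cast
    field_simp

private lemma sum_powerset_prod_mul_sum {α : Type*} [DecidableEq α] (P : Finset α)
    (c L : α → ℝ) :
    ∑ S ∈ P.powerset, (∏ p ∈ S, c p) * ∑ p ∈ S, L p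
      = ∑ p ∈ P, c p * L p * ∏ q ∈ P.erase p, (1 + c q) := by
  classical
  induction P using Finset.induction_on with
  | empty => simp
  | @insert a s ha ih =>
    have hps : ∑ S ∈ s.powerset, ∏ p ∈ S, c p = ∏ q ∈ s, (1 + c q) := by
      rw [show (fun q => 1 + c q) = fun q => c q + 1 by funext q; ring, Finset.prod_add]
      simp
    rw [Finset.sum_powerset_insert ha, ih]
    have h2 : ∑ S ∈ s.powerset, (∏ p ∈ insert a S, c p) * ∑ p ∈ insert a S, L p
        = c a * L a * ∏ q ∈ s, (1 + c q)
          + c a * ∑ S ∈ s.powerset, (∏ p ∈ S, c p) * ∑ p ∈ S, L p := by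
      rw [Finset.mul_sum, ← hps, Finset.mul_sum, ← Finset.sum_add_distrib]
      apply Finset.sum_congr rfl
      intro S hS
      have haS : a ∉ S := fun h => ha (Finset.mem_powerset.mp hS h)
      rw [Finset.prod_insert haS, Finset.sum_insert haS]
      ring
    rw [h2, ih, Finset.sum_insert ha, Finset.erase_insert ha]
    have h3 : ∀ p ∈ s, c p * L p * ∏ q ∈ (insert a s).erase p, (1 + c q)
        = (1 + c a) * (c p * L p * ∏ q ∈ s.erase p, (1 + c q)) := by
      intro p hp
      have hpa : p ≠ a := by rintro rfl; exact ha hp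
      rw [Finset.erase_insert_of_ne hpa.symm,
        Finset.prod_insert (fun h => ha (Finset.mem_of_mem_erase h))]
      ring
    rw [Finset.sum_congr rfl h3, ← Finset.mul_sum]
    ring

private lemma totient_div_eq_prod (k : ℕ) (hk : k ≠ 0) :
    ((Nat.totient k : ℝ) / (k : ℝ)) = ∏ p ∈ k.primeFactors, (1 - (p : ℝ)⁻¹) := by
  have h := Nat.totient_eq_mul_prod_factors k
  have h' := congrArg (fun x : ℚ => (x : ℝ)) h
  push_cast at h'
  rw [h']
  have : (k : ℝ) ≠ 0 := by exact_mod_cast hk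
  field_simp

theorem sum_moebius_div_mul_log (k : ℕ) (hk : 1 < k) :
    ∑ d ∈ k.divisors, ((moebius d : ℝ) / (d : ℝ)) * Real.log d =
      -((Nat.totient k : ℝ) / (k : ℝ)) * ∑ p ∈ k.primeFactors, Real.log p / ((p : ℝ) - 1) := by
  classical
  have hk0 : k ≠ 0 := by omega
  have h1 : ∑ d ∈ k.divisors, ((moebius d : ℝ) / (d : ℝ)) * Real.log d
      = ∑ d ∈ k.divisors with Squarefree d, ((moebius d : ℝ) / (d : ℝ)) * Real.log d := by
    refine (Finset.sum_filter_of_ne ?_).symm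
    intro d _ h
    by_contra hsf
    rw [moebius_eq_zero_of_not_squarefree hsf] at h
    simp at h
  rw [h1, Nat.sum_divisors_filter_squarefree hk0, Nat.factors_eq]
  simp only [List.toFinset_coe, Nat.toFinset_factors, Finset.prod_val, Function.id_def]
  have key : ∀ S ∈ k.primeFactors.powerset,
      ((moebius (∏ p ∈ S, p) : ℝ)) / ((∏ p ∈ S, p : ℕ) : ℝ) * Real.log ((∏ p ∈ S, p : ℕ) : ℝ)
        = (∏ p ∈ S, (-(p : ℝ)⁻¹)) * ∑ p ∈ S, Real.log p := by
    intro S hS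
    have hprime : ∀ p ∈ S, p.Prime := fun p hp =>
      Nat.prime_of_mem_primeFactors (Finset.mem_powerset.mp hS hp)
    rw [moebius_prod_primes S hprime]
    congr 1
    rw [Nat.cast_prod]
    exact Real.log_prod (fun p hp => by exact_mod_cast (hprime p hp).ne_zero)
  rw [Finset.sum_congr rfl key, sum_powerset_prod_mul_sum]
  have hterm : ∀ p ∈ k.primeFactors,
      (-(p : ℝ)⁻¹) * Real.log p * ∏ q ∈ k.primeFactors.erase p, (1 + -(q : ℝ)⁻¹)
        = -((Nat.totient k : ℝ) / (k : ℝ)) * (Real.log p / ((p : ℝ) - 1)) := by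
    intro p hp
    have hpP : p.Prime := Nat.prime_of_mem_primeFactors hp
    have hp1 : (1 : ℝ) < p := by exact_mod_cast hpP.one_lt
    have hp0 : (p : ℝ) ≠ 0 := by positivity
    have hne : (1 : ℝ) + -(p : ℝ)⁻¹ ≠ 0 := by
      have : (p : ℝ)⁻¹ < 1 := inv_lt_one_of_one_lt₀ hp1
      intro h; nlinarith
    have hfull : (∏ q ∈ k.primeFactors.erase p, (1 + -(q : ℝ)⁻¹)) * (1 + -(p : ℝ)⁻¹)
        = ∏ q ∈ k.primeFactors, (1 + -(q : ℝ)⁻¹) := Finset.prod_erase_mul _ _ hp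
    have htot : ∏ q ∈ k.primeFactors, (1 + -(q : ℝ)⁻¹) = (Nat.totient k : ℝ) / (k : ℝ) := by
      rw [totient_div_eq_prod k hk0]
      apply Finset.prod_congr rfl
      intro q _; ring
    have herase : ∏ q ∈ k.primeFactors.erase p, (1 + -(q : ℝ)⁻¹)
        = ((Nat.totient k : ℝ) / (k : ℝ)) / (1 + -(p : ℝ)⁻¹) := by
      rw [eq_div_iff hne, hfull, htot]
    rw [herase]
    have hpm1 : (p : ℝ) - 1 ≠ 0 := by intro h; nlinarith
    have harith : ∀ T : ℝ, -(p : ℝ)⁻¹ * Real.log p * (T / (1 + -(p : ℝ)⁻¹))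
        = -T * (Real.log p / ((p : ℝ) - 1)) := by
      intro T
      have hshow : (1 : ℝ) + -(p : ℝ)⁻¹ = ((p : ℝ) - 1) / (p : ℝ) := by
        field_simp
        ring
      rw [hshow]
      field_simp
    exact harith _
  rw [Finset.sum_congr rfl hterm, ← Finset.mul_sum]
end

section
/- For every positive integer k, (1/2^k) · Σ_{j=0}^{k} C(k,j) · c_k(j) = Σ_{d | k} μ(k/d) · Σ_{ℓ=1}^{d} (−1)^{ℓk/d} · cos^k(ℓπ/d), where C(k,j) is the binomial coefficient and μ is the Möbius function. -/
open Finset ArithmeticFunction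
open scoped ArithmeticFunction.Moebius

open Complex in

lemma key1 (k m : ℕ) (hk : 0 < k) :
    (1 / (2:ℂ)^k) * ∑ j ∈ range (k+1),
      (k.choose j : ℂ) * Complex.exp (2 * (Real.pi:ℂ) * Complex.I * m * j / k)
    = (-1:ℂ)^m * ((Real.cos ((m:ℝ) * Real.pi / k) : ℝ) : ℂ)^k := by
  have hk' : (k:ℂ) ≠ 0 := Nat.cast_ne_zero.mpr hk.ne'
  set t : ℂ := (m:ℂ) * Real.pi / k with ht
  set w : ℂ := Complex.exp (t * I) with hw
  have hw2 : Complex.exp (2*(t*I)) = w^2 := by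
    rw [hw, sq, ← Complex.exp_add]; ring_nf
  have hz : ∀ j ∈ range (k+1), (k.choose j : ℂ) * Complex.exp (2 * (Real.pi:ℂ) * Complex.I * m * j / k)
      = (w^2)^j * 1 ^ (k - j) * (k.choose j : ℂ) := by
    intro j _
    have h3 : 2 * (Real.pi:ℂ) * Complex.I * m * j / k = j * (2 * (t * I)) := by
      rw [ht]; field_simp
    rw [h3, Complex.exp_nat_mul, hw2, one_pow, mul_one, mul_comm]
  rw [Finset.sum_congr rfl hz, ← add_pow]
  have h1 : w^2 + 1 = w * (2 * Complex.cos t) := by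
    rw [two_cos, mul_add, hw, ← Complex.exp_add, ← Complex.exp_add, sq, ← Complex.exp_add]
    norm_num
  have hwk : w ^ k = (-1:ℂ)^m := by
    rw [hw, ← Complex.exp_nat_mul, ← Complex.exp_pi_mul_I, ← Complex.exp_nat_mul]
    congr 1
    rw [ht]; field_simp
  have hcos : Complex.cos t = ((Real.cos ((m:ℝ) * Real.pi / k) : ℝ) : ℂ) := by
    rw [Complex.ofReal_cos]
    congr 1
    push_cast [ht]; ring
  rw [h1, mul_pow, mul_pow, hwk, hcos]
  have h2 : (2:ℂ)^k ≠ 0 := pow_ne_zero _ two_ne_zero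
  field_simp


lemma moebsumC (n : ℕ) : ∑ d ∈ n.divisors, (μ d : ℂ) = if n = 1 then 1 else 0 := by
  have hZ : ∑ d ∈ n.divisors, (μ d : ℤ) = if n = 1 then 1 else 0 := by
    have := congrArg (fun f => f n) moebius_mul_coe_zeta
    simp only [coe_mul_zeta_apply, one_apply] at this
    exact this
  have : ((∑ d ∈ n.divisors, (μ d : ℤ) : ℤ) : ℂ) = ∑ d ∈ n.divisors, (μ d : ℂ) := by
    push_cast; rfl
  rw [← this, hZ]
  split_ifs <;> norm_num

lemma key2 (k : ℕ) (hk : 0 < k) (f : ℕ → ℂ) :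
    ∑ d ∈ k.divisors, (μ (k / d) : ℂ) * ∑ l ∈ Finset.Icc 1 d, f (l * (k / d))
    = ∑ m ∈ (Finset.Icc 1 k).filter (fun m => Nat.gcd m k = 1), f m := by
  have hk0 := hk.ne'
  have step1 : ∑ d ∈ k.divisors, (μ (k / d) : ℂ) * ∑ l ∈ Finset.Icc 1 d, f (l * (k / d))
      = ∑ d ∈ k.divisors, (μ d : ℂ) * ∑ l ∈ Finset.Icc 1 (k/d), f (l * d) := by
    rw [← Nat.sum_div_divisors k (fun d => (μ d : ℂ) * ∑ l ∈ Finset.Icc 1 (k/d), f (l * d))]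
    refine Finset.sum_congr rfl fun d hd => ?_
    obtain ⟨hdvd, -⟩ := Nat.mem_divisors.mp hd
    rw [Nat.div_div_self hdvd hk0]
  rw [step1]
  have step2 : ∀ d ∈ k.divisors, ∑ l ∈ Finset.Icc 1 (k/d), f (l * d)
      = ∑ m ∈ (Finset.Icc 1 k).filter (fun m => d ∣ m), f m := by
    intro d hd
    obtain ⟨hdvd, -⟩ := Nat.mem_divisors.mp hd
    have hd0 : 0 < d := Nat.pos_of_dvd_of_pos hdvd hk
    refine Finset.sum_bij' (fun l _ => l * d) (fun m _ => m / d) ?_ ?_ ?_ ?_ ?_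
    · intro l hl
      obtain ⟨h1, h2⟩ := Finset.mem_Icc.mp hl
      refine Finset.mem_filter.mpr ⟨Finset.mem_Icc.mpr ⟨?_, ?_⟩, dvd_mul_left d l⟩
      · exact Nat.one_le_iff_ne_zero.mpr (by positivity)
      · calc l * d ≤ (k/d) * d := Nat.mul_le_mul_right d h2
          _ ≤ k := Nat.div_mul_le_self k d
    · intro m hm
      obtain ⟨hm1, hmd⟩ := Finset.mem_filter.mp hm
      obtain ⟨h1, h2⟩ := Finset.mem_Icc.mp hm1
      refine Finset.mem_Icc.mpr ⟨?_, ?_⟩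
      · exact Nat.one_le_div_iff hd0 |>.mpr (Nat.le_of_dvd (lt_of_lt_of_le one_pos h1) hmd)
      · exact Nat.div_le_div_right h2
    · intro l _
      exact Nat.mul_div_cancel _ hd0
    · intro m hm
      exact Nat.div_mul_cancel (Finset.mem_filter.mp hm).2
    · intro l _
      rfl
  have step3 : ∀ m ∈ Finset.Icc 1 k,
      ∑ d ∈ k.divisors, (μ d : ℂ) * (if d ∣ m then f m else 0)
      = (if Nat.gcd m k = 1 then 1 else 0) * f m := by
    intro m hm
    have hm0 : m ≠ 0 := by
      have := (Finset.mem_Icc.mp hm).1; omega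
    have hfil : k.divisors.filter (fun d => d ∣ m) = (Nat.gcd k m).divisors := by
      ext e
      simp only [Finset.mem_filter, Nat.mem_divisors, Nat.dvd_gcd_iff]
      constructor
      · rintro ⟨⟨h1, _⟩, h2⟩; exact ⟨⟨h1, h2⟩, Nat.gcd_ne_zero_left hk0⟩
      · rintro ⟨⟨h1, h2⟩, _⟩; exact ⟨⟨h1, hk0⟩, h2⟩
    calc ∑ d ∈ k.divisors, (μ d : ℂ) * (if d ∣ m then f m else 0)
        = ∑ d ∈ k.divisors, (if d ∣ m then (μ d : ℂ) * f m else 0) := by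
          refine Finset.sum_congr rfl fun d _ => ?_; split_ifs <;> simp
      _ = ∑ d ∈ k.divisors.filter (fun d => d ∣ m), (μ d : ℂ) * f m := by
          rw [Finset.sum_filter]
      _ = (∑ d ∈ (Nat.gcd k m).divisors, (μ d : ℂ)) * f m := by
          rw [hfil, Finset.sum_mul]
      _ = (if Nat.gcd m k = 1 then 1 else 0) * f m := by
          rw [moebsumC, Nat.gcd_comm]
  calc ∑ d ∈ k.divisors, (μ d : ℂ) * ∑ l ∈ Finset.Icc 1 (k/d), f (l * d)
      = ∑ d ∈ k.divisors, ∑ m ∈ Finset.Icc 1 k, (μ d : ℂ) * (if d ∣ m then f m else 0) := by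
        refine Finset.sum_congr rfl fun d hd => ?_
        rw [step2 d hd, Finset.sum_filter, Finset.mul_sum]
    _ = ∑ m ∈ Finset.Icc 1 k, ∑ d ∈ k.divisors, (μ d : ℂ) * (if d ∣ m then f m else 0) :=
        Finset.sum_comm
    _ = ∑ m ∈ Finset.Icc 1 k, (if Nat.gcd m k = 1 then 1 else 0) * f m :=
        Finset.sum_congr rfl step3
    _ = ∑ m ∈ (Finset.Icc 1 k).filter (fun m => Nat.gcd m k = 1), f m := by
        rw [Finset.sum_filter]
        exact Finset.sum_congr rfl fun m _ => by split_ifs <;> simp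

theorem binomial_weighted_average_ramanujan_sum (k : ℕ) (hk : 0 < k) :
    (1 / (2 : ℂ) ^ k) * ∑ j ∈ Finset.range (k + 1), (k.choose j : ℂ) * ramanujanSum k j =
      ∑ d ∈ k.divisors, (moebius (k / d) : ℂ) *
        ∑ l ∈ Finset.Icc 1 d, (-1 : ℂ) ^ (l * (k / d)) *
          ((Real.cos ((l : ℝ) * Real.pi / (d : ℝ))) : ℂ) ^ k := by
  have hk0 := hk.ne'
  have hkR : (k:ℝ) ≠ 0 := Nat.cast_ne_zero.mpr hk0
  set f : ℕ → ℂ := fun m => (-1:ℂ)^m * ((Real.cos ((m:ℝ) * Real.pi / k) : ℝ) : ℂ)^k with hf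
  have lhs_eq : (1 / (2 : ℂ) ^ k) * ∑ j ∈ Finset.range (k + 1), (k.choose j : ℂ) * ramanujanSum k j
      = ∑ m ∈ (Finset.Icc 1 k).filter (fun m => Nat.gcd m k = 1), f m := by
    unfold ramanujanSum
    rw [Finset.mul_sum]
    have swap : ∑ j ∈ Finset.range (k + 1), (1 / (2:ℂ)^k) * ((k.choose j : ℂ) *
        ∑ m ∈ (Finset.Icc 1 k).filter (fun m => Nat.gcd m k = 1),
          Complex.exp (2 * (Real.pi : ℂ) * Complex.I * (m : ℂ) * ((j:ℤ) : ℂ) / (k : ℂ)))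
        = ∑ m ∈ (Finset.Icc 1 k).filter (fun m => Nat.gcd m k = 1),
            (1 / (2:ℂ)^k) * ∑ j ∈ Finset.range (k + 1),
              (k.choose j : ℂ) * Complex.exp (2 * (Real.pi : ℂ) * Complex.I * (m : ℂ) * (j : ℂ) / (k : ℂ)) := by
      simp only [Finset.mul_sum]
      rw [Finset.sum_comm]
      refine Finset.sum_congr rfl fun m _ => Finset.sum_congr rfl fun j _ => ?_
      push_cast
      ring
    rw [swap]
    refine Finset.sum_congr rfl fun m _ => ?_
    exact key1 k m hk
  rw [lhs_eq, ← key2 k hk f]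
  refine Finset.sum_congr rfl fun d hd => ?_
  obtain ⟨hdvd, -⟩ := Nat.mem_divisors.mp hd
  have hd0 : 0 < d := Nat.pos_of_dvd_of_pos hdvd hk
  have hdR : (d:ℝ) ≠ 0 := Nat.cast_ne_zero.mpr hd0.ne'
  have hkd : ((k/d : ℕ) : ℝ) * d = k := by
    exact_mod_cast congrArg (Nat.cast : ℕ → ℝ) (Nat.div_mul_cancel hdvd)
  congr 1
  refine Finset.sum_congr rfl fun l _ => ?_
  have harg : (((l * (k/d) : ℕ)) : ℝ) * Real.pi / k = (l:ℝ) * Real.pi / d := by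
    push_cast
    field_simp
    rw [mul_assoc, hkd]
  rw [hf]
  simp only [harg]
end

section
/- Let n be a positive integer, let k_1, …, k_n be positive integers and let k := lcm(k_1, …, k_n). Then (1/k^2) · Σ_{j=1}^{k} j · c_{k_1}(j) ⋯ c_{k_n}(j) = (φ(k_1) ⋯ φ(k_n))/(2k) + E(k_1, …, k_n)/2, where E(k_1, …, k_n) := (1/k) · Σ_{j=1}^{k} c_{k_1}(j) ⋯ c_{k_n}(j). -/
open Finset ArithmeticFunction

lemma ramanujanSum_card (k : ℕ) :
    ((Finset.Icc 1 k).filter (fun m => Nat.gcd m k = 1)).card = Nat.totient k := by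
  rw [← Nat.filter_coprime_Ico_eq_totient k 1]
  congr 1
  ext m
  simp only [Finset.mem_filter, Finset.mem_Icc, Finset.mem_Ico, Nat.Coprime, Nat.gcd_comm k]
  constructor <;> rintro ⟨⟨h1, h2⟩, h3⟩ <;> exact ⟨⟨h1, by omega⟩, h3⟩

lemma exp_eq_one_of_dvd {k : ℕ} (hk : 0 < k) {m : ℕ} {j : ℤ} (h : (k : ℤ) ∣ m * j) :
    Complex.exp (2 * (Real.pi : ℂ) * Complex.I * (m : ℂ) * (j : ℂ) / (k : ℂ)) = 1 := by
  obtain ⟨c, hc⟩ := h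
  have hk' : (k : ℂ) ≠ 0 := Nat.cast_ne_zero.mpr hk.ne'
  have h3 : (m : ℂ) * (j : ℂ) = (k : ℂ) * (c : ℂ) := by exact_mod_cast congrArg (Int.cast : ℤ → ℂ) hc
  have : 2 * (Real.pi : ℂ) * Complex.I * (m : ℂ) * (j : ℂ) / (k : ℂ)
      = (c : ℂ) * (2 * (Real.pi : ℂ) * Complex.I) := by
    field_simp
    linear_combination h3
  rw [this, Complex.exp_int_mul_two_pi_mul_I]

/-- Value at a multiple of `k` is the totient. -/
lemma ramanujanSum_dvd {k : ℕ} (hk : 0 < k) {j : ℤ} (h : (k : ℤ) ∣ j) :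
    ramanujanSum k j = Nat.totient k := by
  rw [ramanujanSum, ← ramanujanSum_card k]
  trans ∑ _m ∈ (Finset.Icc 1 k).filter (fun m => Nat.gcd m k = 1), (1 : ℂ)
  · exact Finset.sum_congr rfl fun m _ => exp_eq_one_of_dvd hk (h.mul_left m)
  · simp

/-- Negation symmetry. -/
lemma ramanujanSum_neg {k : ℕ} (hk : 0 < k) (j : ℤ) :
    ramanujanSum k (-j) = ramanujanSum k j := by
  rcases eq_or_lt_of_le (show 1 ≤ k from hk) with h1 | h1
  · -- k = 1
    have : k = 1 := h1.symm
    subst this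
    rw [ramanujanSum, ramanujanSum]
    refine Finset.sum_congr rfl fun m hm => ?_
    simp only [Finset.mem_filter, Finset.mem_Icc] at hm
    have hm1 : m = 1 := le_antisymm hm.1.2 hm.1.1
    subst hm1
    rw [exp_eq_one_of_dvd one_pos (by simp), exp_eq_one_of_dvd one_pos (by simp)]
  · -- k ≥ 2
    rw [ramanujanSum, ramanujanSum]
    refine Finset.sum_nbij' (fun m => k - m) (fun m => k - m) ?_ ?_ ?_ ?_ ?_
    case refine_1 | refine_2 =>
      intro m hm
      simp only [Finset.mem_filter, Finset.mem_Icc] at hm ⊢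
      obtain ⟨⟨hm1, hm2⟩, hm3⟩ := hm
      have hmk : m < k := by
        rcases eq_or_lt_of_le hm2 with h | h
        · exfalso; rw [h, Nat.gcd_self] at hm3; omega
        · exact h
      refine ⟨⟨by omega, by omega⟩, ?_⟩
      rw [← Nat.gcd_sub_self_right (Nat.sub_le k m), Nat.sub_sub_self hmk.le,
        Nat.gcd_sub_self_left hmk.le, Nat.gcd_comm]
      exact hm3
    case refine_3 | refine_4 =>
      intro m hm
      simp only [Finset.mem_filter, Finset.mem_Icc] at hm
      obtain ⟨⟨hm1, hm2⟩, hm3⟩ := hm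
      have hmk : m < k := by
        rcases eq_or_lt_of_le hm2 with h | h
        · exfalso; rw [h, Nat.gcd_self] at hm3; omega
        · exact h
      omega
    case refine_5 =>
      intro m hm
      simp only [Finset.mem_filter, Finset.mem_Icc] at hm
      have hmk : m ≤ k := hm.1.2
      have hcast : ((k - m : ℕ) : ℂ) = (k : ℂ) - (m : ℂ) := by
        push_cast [Nat.cast_sub hmk]; ring
      have hk' : (k : ℂ) ≠ 0 := Nat.cast_ne_zero.mpr hk.ne'
      rw [hcast]
      rw [show 2 * (Real.pi : ℂ) * Complex.I * ((k : ℂ) - (m : ℂ)) * ((j : ℤ) : ℂ) / (k : ℂ)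
          = (j : ℤ) * (2 * (Real.pi : ℂ) * Complex.I)
            + 2 * (Real.pi : ℂ) * Complex.I * (m : ℂ) * ((-j : ℤ) : ℂ) / (k : ℂ) by
        push_cast; field_simp; ring]
      rw [Complex.exp_add, Complex.exp_int_mul_two_pi_mul_I, one_mul]

/-- Reflection symmetry. -/
lemma ramanujanSum_sub {k K : ℕ} (hk : 0 < k) (hd : k ∣ K) (j : ℤ) :
    ramanujanSum k ((K : ℤ) - j) = ramanujanSum k j := by
  rw [← ramanujanSum_neg hk j, ramanujanSum, ramanujanSum]
  refine Finset.sum_congr rfl fun m hm => ?_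
  have hk' : (k : ℂ) ≠ 0 := Nat.cast_ne_zero.mpr hk.ne'
  rw [show 2 * (Real.pi : ℂ) * Complex.I * (m : ℂ) * (((K : ℤ) - j : ℤ) : ℂ) / (k : ℂ)
      = 2 * (Real.pi : ℂ) * Complex.I * (m : ℂ) * (((K : ℕ) : ℤ) : ℂ) / (k : ℂ)
        + 2 * (Real.pi : ℂ) * Complex.I * (m : ℂ) * ((-j : ℤ) : ℂ) / (k : ℂ) by
    push_cast; field_simp; ring]
  rw [Complex.exp_add,
    exp_eq_one_of_dvd hk (Dvd.dvd.mul_left (Int.natCast_dvd_natCast.mpr hd) m), one_mul]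

theorem multivariable_weighted_average_ramanujan_sum_r_one (n : ℕ) (hn : 0 < n)
    (k : Fin n → ℕ) (hk : ∀ i, 0 < k i) (K : ℕ) (hK : K = Finset.univ.lcm k) :
    (1 / (K : ℂ) ^ 2) * ∑ j ∈ Finset.Icc 1 K, (j : ℂ) * ∏ i, ramanujanSum (k i) j =
      (∏ i, (Nat.totient (k i) : ℂ)) / (2 * K) +
        ((1 / (K : ℂ)) * ∑ j ∈ Finset.Icc 1 K, ∏ i, ramanujanSum (k i) j) / 2 := by
  have hdvd : ∀ i, k i ∣ K := fun i => hK ▸ Finset.dvd_lcm (Finset.mem_univ i)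
  have hKpos : 0 < K := by
    have hne : Finset.univ.lcm k ≠ 0 := by
      rw [Ne, Finset.lcm_eq_zero_iff]
      rintro ⟨i, -, hi⟩
      exact (hk i).ne' hi
    exact hK ▸ Nat.pos_of_ne_zero hne
  set P : ℕ → ℂ := fun j => ∏ i, ramanujanSum (k i) (j : ℤ) with hP
  have hPsym : ∀ j : ℕ, j ≤ K → P (K - j) = P j := by
    intro j hj
    simp only [hP]
    refine Finset.prod_congr rfl fun i _ => ?_
    have hcast : ((K - j : ℕ) : ℤ) = (K : ℤ) - (j : ℤ) := by omega
    rw [hcast]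
    exact ramanujanSum_sub (hk i) (hdvd i) j
  have hPK : P K = ∏ i, (Nat.totient (k i) : ℂ) :=
    Finset.prod_congr rfl fun i _ =>
      ramanujanSum_dvd (hk i) (Int.natCast_dvd_natCast.mpr (hdvd i))
  have hrefl : ∑ j ∈ Finset.Ico 1 K, (j : ℂ) * P j
      = ∑ j ∈ Finset.Ico 1 K, ((K : ℂ) - (j : ℂ)) * P j := by
    refine Finset.sum_nbij' (fun j => K - j) (fun j => K - j) ?_ ?_ ?_ ?_ ?_
    case refine_1 | refine_2 =>
      intro j hj
      simp only [Finset.mem_Ico] at hj ⊢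
      omega
    case refine_3 | refine_4 =>
      intro j hj
      simp only [Finset.mem_Ico] at hj
      omega
    case refine_5 =>
      intro j hj
      simp only [Finset.mem_Ico] at hj
      rw [hPsym j (by omega)]
      have hc : ((K - j : ℕ) : ℂ) = (K : ℂ) - (j : ℂ) := by
        push_cast [Nat.cast_sub (by omega : j ≤ K)]; ring
      rw [hc]
      ring
  have hsplit : Finset.Icc 1 K = insert K (Finset.Ico 1 K) := by
    ext m; simp only [Finset.mem_Icc, Finset.mem_insert, Finset.mem_Ico]; omega
  have hKnot : K ∉ Finset.Ico 1 K := by simp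
  have key : (∑ j ∈ Finset.Icc 1 K, (j : ℂ) * P j) * 2
      = (K : ℂ) * (∑ j ∈ Finset.Icc 1 K, P j) + (K : ℂ) * P K := by
    rw [hsplit, Finset.sum_insert hKnot, Finset.sum_insert hKnot]
    have h2 : (∑ j ∈ Finset.Ico 1 K, (j : ℂ) * P j) * 2
        = (K : ℂ) * ∑ j ∈ Finset.Ico 1 K, P j := by
      calc (∑ j ∈ Finset.Ico 1 K, (j : ℂ) * P j) * 2
          = ∑ j ∈ Finset.Ico 1 K, (j : ℂ) * P j
            + ∑ j ∈ Finset.Ico 1 K, ((K : ℂ) - (j : ℂ)) * P j := by rw [← hrefl]; ring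
        _ = ∑ j ∈ Finset.Ico 1 K, (K : ℂ) * P j := by
            rw [← Finset.sum_add_distrib]
            exact Finset.sum_congr rfl fun j _ => by ring
        _ = (K : ℂ) * ∑ j ∈ Finset.Ico 1 K, P j := by rw [Finset.mul_sum]
    linear_combination h2
  have hK' : (K : ℂ) ≠ 0 := Nat.cast_ne_zero.mpr hKpos.ne'
  show (1 / (K : ℂ) ^ 2) * ∑ j ∈ Finset.Icc 1 K, (j : ℂ) * P j =
      (∏ i, (Nat.totient (k i) : ℂ)) / (2 * K) +
        ((1 / (K : ℂ)) * ∑ j ∈ Finset.Icc 1 K, P j) / 2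
  rw [← hPK]
  field_simp
  linear_combination key
end
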